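/- arXiv:0808.2303 — 7 statements merged into one kernel-verified Lean document; each statement's English description precedes it below -/
import Mathlib

section
/- For an (n+p)×(n+p) invertible matrix A, the determinant of the top-left n×n block of A times det(A⁻¹) equals the determinant of the bottom-right p×p block of A⁻¹; i.e. det(A⁻¹)·det((A_{ij})_{1≤i,j≤n}) = det(((A⁻¹)_{kl})_{n<k,l≤n+p}). -/
/-- Jacobi's identity: for an invertible `(n+p) × (n+p)` matrix `A`, the determinant of the
top-left `n × n` block of `A` times `det (A⁻¹)` equals the determinant of the bottom-right
`p × p` block of `A⁻¹`. -/
theorem jacobi_identity (n p : ℕ) (A : Matrix (Fin n ⊕ Fin p) (Fin n ⊕ Fin p) ℝ)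
    (hA : IsUnit A.det) :
    A⁻¹.det * (A.submatrix Sum.inl Sum.inl).det
      = (A⁻¹.submatrix Sum.inr Sum.inr).det := by
  set a := A.submatrix Sum.inl Sum.inl with ha
  set b' := A⁻¹.submatrix Sum.inl Sum.inr with hb'
  set d' := A⁻¹.submatrix Sum.inr Sum.inr with hd'
  have hAinv : A * A⁻¹ = 1 := Matrix.mul_nonsing_inv A hA
  have e12 : a * b' + A.submatrix Sum.inl Sum.inr * d' = 0 := by
    ext i j
    have h := congrFun (congrFun hAinv (Sum.inl i)) (Sum.inr j)
    simpa [Matrix.mul_apply, Fintype.sum_sum_type, ha, hb', hd', Matrix.one_apply] using h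
  have e22 : A.submatrix Sum.inr Sum.inl * b' + A.submatrix Sum.inr Sum.inr * d' = 1 := by
    ext i j
    have h := congrFun (congrFun hAinv (Sum.inr i)) (Sum.inr j)
    simpa [Matrix.mul_apply, Fintype.sum_sum_type, ha, hb', hd', Matrix.one_apply] using h
  have hmul : A * Matrix.fromBlocks 1 b' 0 d'
      = Matrix.fromBlocks a 0 (A.submatrix Sum.inr Sum.inl) 1 := by
    conv_lhs => rw [← Matrix.fromBlocks_toBlocks A]
    rw [Matrix.fromBlocks_multiply]
    simp only [Matrix.mul_one, Matrix.mul_zero, add_zero]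
    exact Matrix.fromBlocks_inj.mpr ⟨rfl, e12, rfl, e22⟩
  have hdet := congrArg Matrix.det hmul
  rw [Matrix.det_mul, Matrix.det_fromBlocks_zero₂₁, Matrix.det_fromBlocks_zero₁₂,
    Matrix.det_one, Matrix.det_one, one_mul, mul_one] at hdet
  have hdetinv : A⁻¹.det = (A.det)⁻¹ := by
    rw [Matrix.det_nonsing_inv, Ring.inverse_eq_inv']
  have hne : A.det ≠ 0 := hA.ne_zero
  rw [hdetinv]
  field_simp
  linarith [hdet]
end

section
/- Let T be an infinite tree in which each vertex x has finite degree d_x, fix 0 < u < inf_x 1/(d_x − 1), set λ_x = (d_x − 1)u + 1/u and C_{xy} = 1 for edges {x,y}. Then the matrix Ĝ with entries Ĝ^{x,y} = u^{d(x,y)}·u/(1−u²) satisfies (M_λ − A)Ĝ = I, where A is the adjacency matrix and d is the graph distance. -/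
open SimpleGraph

/-- In an infinite connected locally finite graph there is a vertex of degree at least 2. -/
lemma exists_degree_two (V : Type*) [Infinite V] [DecidableEq V] (G : SimpleGraph V)
    [DecidableRel G.Adj] [∀ v, Fintype (G.neighborSet v)] (hconn : G.Connected) :
    ∃ w : V, 2 ≤ G.degree w := by
  obtain ⟨z⟩ := (inferInstance : Nonempty V)
  obtain ⟨v, hv⟩ := Infinite.exists_notMem_finset (insert z (G.neighborFinset z))
  simp only [Finset.mem_insert, mem_neighborFinset] at hv
  push_neg at hv
  have hvz : v ≠ z := hv.1
  have hd2 : 2 ≤ G.dist z v := by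
    have h0 : G.dist z v ≠ 0 := by
      simpa [hconn.dist_eq_zero_iff] using hvz.symm
    have h1 : G.dist z v ≠ 1 := by
      intro h; exact hv.2 (dist_eq_one_iff_adj.mp h)
    omega
  obtain ⟨p, hp, hlen⟩ := hconn.exists_path_of_dist z v
  match p, hp, hlen with
  | Walk.cons (v := w) h (Walk.cons (v := w2) h' q), hp, hlen =>
    refine ⟨w, ?_⟩
    have hz : z ∉ (Walk.cons h' q).support := ((Walk.cons_isPath_iff _ _).1 hp).2
    have hzw2 : z ≠ w2 := by
      intro hzz
      exact hz (by rw [hzz]; simp [Walk.support_cons, Walk.start_mem_support])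
    have hsub : ({z, w2} : Finset V) ⊆ G.neighborFinset w := by
      intro a ha
      simp only [Finset.mem_insert, Finset.mem_singleton] at ha
      rcases ha with rfl | rfl
      · exact (mem_neighborFinset _ _ _).2 h.symm
      · exact (mem_neighborFinset _ _ _).2 h'
    calc 2 = ({z, w2} : Finset V).card := by
            rw [Finset.card_insert_of_notMem (by simpa using hzw2), Finset.card_singleton]
      _ ≤ (G.neighborFinset w).card := Finset.card_le_card hsub
  | Walk.cons h Walk.nil, hp, hlen => simp at hlen; omega
  | Walk.nil, hp, hlen => simp at hlen; simp at hd2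

/-- Green function on an infinite locally finite tree: with `λ_x = (d_x - 1) u + 1/u` for
`0 < u < inf_x 1/(d_x - 1)`, unit conductances on edges, the matrix
`Ĝ^{x,y} = u^{d(x,y)} · u/(1-u²)` satisfies `(M_λ - A) Ĝ = I`, stated entrywise. -/
theorem green_tree (V : Type*) [Infinite V] [DecidableEq V] (G : SimpleGraph V)
    [DecidableRel G.Adj] [∀ v, Fintype (G.neighborSet v)]
    (hT : G.IsTree) (u : ℝ) (hu : 0 < u)
    (hdeg : ∀ x : V, u * ((G.degree x : ℝ) - 1) < 1) (z y : V) :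
    (((G.degree z : ℝ) - 1) * u + 1 / u) * (u ^ (G.dist z y) * (u / (1 - u ^ 2)))
      - ∑ x ∈ G.neighborFinset z, u ^ (G.dist x y) * (u / (1 - u ^ 2))
      = if z = y then 1 else 0 := by
  have hconn := hT.isConnected
  by_cases hzy : z = y
  · -- diagonal case
    subst hzy
    obtain ⟨w, hw⟩ := exists_degree_two V G hconn
    have hu1 : u < 1 := by
      have h1 := hdeg w
      have h2 : (2:ℝ) ≤ G.degree w := by exact_mod_cast hw
      by_contra hc
      push_neg at hc
      have : (1:ℝ) ≤ (G.degree w : ℝ) - 1 := by linarith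
      nlinarith
    have h1u2 : 1 - u ^ 2 ≠ 0 := by nlinarith
    have hsum : ∑ x ∈ G.neighborFinset z, u ^ (G.dist x z) * (u / (1 - u ^ 2))
        = (G.degree z : ℝ) * (u * (u / (1 - u ^ 2))) := by
      rw [Finset.sum_congr rfl (fun x hx => ?_), Finset.sum_const, nsmul_eq_mul,
        SimpleGraph.card_neighborFinset_eq_degree]
      have hadj : G.Adj x z := ((mem_neighborFinset _ _ _).1 hx).symm
      rw [dist_eq_one_iff_adj.mpr hadj, pow_one]
    rw [hsum, SimpleGraph.dist_self, pow_zero, if_pos rfl]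
    field_simp
    ring
  · -- off-diagonal case
    rw [if_neg hzy]
    have hdpos : 1 ≤ G.dist z y := hconn.pos_dist_of_ne hzy
    obtain ⟨p, hp, hlen⟩ := hconn.exists_path_of_dist z y
    cases p with
    | nil => exact absurd rfl hzy
    | cons h q =>
      rename_i w
      set d := G.dist z y with hd
      have hqlen : q.length = d - 1 := by
        simp only [Walk.length_cons] at hlen; omega
      have hwy : G.dist w y = d - 1 := by
        have hle : G.dist w y ≤ d - 1 := hqlen ▸ dist_le q
        have hge : d ≤ 1 + G.dist w y := by
          calc d ≤ G.dist z w + G.dist w y := hconn.dist_triangle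
            _ = 1 + G.dist w y := by rw [dist_eq_one_iff_adj.mpr h]
        omega
      have hwmem : w ∈ G.neighborFinset z := (mem_neighborFinset _ _ _).2 h
      have hother : ∀ x ∈ (G.neighborFinset z).erase w, G.dist x y = d + 1 := by
        intro x hx
        have hxw : x ≠ w := (Finset.mem_erase.1 hx).1
        have hadj : G.Adj z x := (mem_neighborFinset _ _ _).1 (Finset.mem_erase.1 hx).2
        have hle : G.dist x y ≤ d + 1 := by
          calc G.dist x y ≤ G.dist x z + G.dist z y := hconn.dist_triangle
            _ = 1 + d := by rw [dist_eq_one_iff_adj.mpr hadj.symm]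
            _ = d + 1 := by omega
        obtain ⟨q', hq'p, hq'len⟩ := hconn.exists_path_of_dist x y
        by_cases hzs : z ∈ q'.support
        · -- shortest path from x to y goes through z : dist x y ≥ 1 + d
          have hspec := q'.take_spec hzs
          have hlen2 : (q'.takeUntil z hzs).length + (q'.dropUntil z hzs).length
              = q'.length := by
            rw [← Walk.length_append, hspec]
          have h1 : 1 ≤ (q'.takeUntil z hzs).length := by
            have h3 := dist_le (q'.takeUntil z hzs)
            have hxz : G.dist x z = 1 := dist_eq_one_iff_adj.mpr hadj.symm
            omega
          have h2 : d ≤ (q'.dropUntil z hzs).length := dist_le _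
          omega
        · -- otherwise cons gives a second path z → y, contradicting uniqueness
          exfalso
          have hpath2 : (Walk.cons hadj q').IsPath := hq'p.cons hzs
          obtain ⟨p₀, -, hup⟩ := hT.existsUnique_path z y
          have heq : Walk.cons h q = Walk.cons hadj q' := by
            rw [hup _ hp, hup _ hpath2]
          have hsup := congrArg Walk.support heq
          rw [Walk.support_cons, Walk.support_cons, q.support_eq_cons,
            q'.support_eq_cons] at hsup
          simp only [List.cons.injEq] at hsup
          exact hxw hsup.2.1.symm
      have hsum : ∑ x ∈ G.neighborFinset z, u ^ (G.dist x y) * (u / (1 - u ^ 2))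
          = ((G.degree z : ℝ) - 1) * (u ^ (d + 1) * (u / (1 - u ^ 2)))
            + u ^ (d - 1) * (u / (1 - u ^ 2)) := by
        rw [← Finset.sum_erase_add _ _ hwmem, hwy]
        congr 1
        rw [Finset.sum_congr rfl (fun x hx => by rw [hother x hx]), Finset.sum_const,
          nsmul_eq_mul, Finset.card_erase_of_mem hwmem,
          SimpleGraph.card_neighborFinset_eq_degree]
        have h1d : 1 ≤ G.degree z := by
          rw [← SimpleGraph.card_neighborFinset_eq_degree]
          exact Finset.card_pos.mpr ⟨w, hwmem⟩
        rw [Nat.cast_sub h1d, Nat.cast_one]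
      rw [hsum]
      have hdsplit : u ^ d = u ^ (d - 1) * u := by
        rw [← pow_succ]; congr 1; omega
      have hd1 : u ^ (d + 1) = u ^ (d - 1) * u ^ 2 := by
        rw [← pow_add]; congr 1; omega
      rw [hdsplit, hd1]
      linear_combination (u ^ (d - 1) * (u / (1 - u ^ 2))) * (one_div_mul_cancel hu.ne')
end

section
/- Let P be a substochastic matrix with spectral radius < 1 and G = (I−P)⁻¹ M_λ⁻¹ the associated Green function (G = (M_λ − C)⁻¹ with C_{xy} = λ_x P^x_y). For fixed x ≠ y, differentiating s ↦ −log det(I − P^{(s)}) at s = 1, where P^{(s)} agrees with P except that the (x,y) entry is multiplied by s, gives the expected number of traversals μ(N_{x,y}) = G^{x,y} C_{x,y}. -/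
open Matrix

/-- Differentiating `s ↦ - log det (I - P^{(s)})` at `s = 1`, where `P^{(s)}` multiplies the
`(x,y)` entry of `P` by `s`, gives the expected traversal number
`μ(N_{x,y}) = G^{x,y} C_{x,y}`, with `G = (M_λ - C)⁻¹` and `P^x_y = C_{x,y}/λ_x`. -/
theorem deriv_logdet_traversal (n : ℕ) (lam : Fin n → ℝ) (hlam : ∀ i, 0 < lam i)
    (C : Matrix (Fin n) (Fin n) ℝ) (hsym : ∀ i j, C i j = C j i)
    (hnn : ∀ i j, 0 ≤ C i j)
    (hsub : ∀ i, ∑ j, C i j ≤ lam i)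
    (P : Matrix (Fin n) (Fin n) ℝ) (hP : ∀ i j, P i j = C i j / lam i)
    (hspec : ∀ z ∈ spectrum ℂ (P.map (algebraMap ℝ ℂ)), ‖z‖ < 1)
    (x y : Fin n) (hxy : x ≠ y) :
    HasDerivAt
      (fun s : ℝ =>
        - Real.log ((1 - (P + (s - 1) • Matrix.single x y (P x y))).det))
      ((Matrix.diagonal lam - C)⁻¹ x y * C x y) 1 := by
  classical
  set M : Matrix (Fin n) (Fin n) ℝ := 1 - P with hM
  set c : ℝ := P x y with hc
  -- det M ≠ 0
  have hdet : M.det ≠ 0 := by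
    intro h
    have h' : ((M.map (algebraMap ℝ ℂ)).det) = 0 := by
      rw [show M.map (algebraMap ℝ ℂ) = (algebraMap ℝ ℂ).mapMatrix M from rfl,
        ← RingHom.map_det, h, map_zero]
    have h1 : (1 : ℂ) ∈ spectrum ℂ (P.map (algebraMap ℝ ℂ)) := by
      rw [spectrum.mem_iff]
      intro hu
      rw [Matrix.isUnit_iff_isUnit_det] at hu
      have heq : (algebraMap ℂ (Matrix (Fin n) (Fin n) ℂ)) 1 - P.map (algebraMap ℝ ℂ)
          = M.map (algebraMap ℝ ℂ) := by
        ext i j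
        simp only [hM, Matrix.sub_apply, Matrix.map_apply, Matrix.algebraMap_matrix_apply,
          Matrix.one_apply]
        split_ifs <;> simp
      rw [heq, h'] at hu
      exact hu.ne_zero rfl
    have := hspec 1 h1
    simp at this
  -- the determinant is affine in s
  have key : ∀ s : ℝ,
      (1 - (P + (s - 1) • Matrix.single x y c)).det
        = M.det - (s - 1) * c * M.adjugate y x := by
    intro s
    have hrow : (1 - (P + (s - 1) • Matrix.single x y c))
        = M.updateRow x (M x + (-(s - 1) * c) • (Pi.single y (1 : ℝ) : Fin n → ℝ)) := by
      ext i j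
      rw [Matrix.updateRow_apply]
      by_cases hix : i = x
      · subst hix
        simp only [if_pos rfl, Matrix.sub_apply, Matrix.add_apply, Matrix.smul_apply,
          Matrix.single, Matrix.of_apply, Pi.add_apply, Pi.smul_apply,
          Pi.single_apply, smul_eq_mul, hM]
        by_cases hjy : j = y
        · simp [hjy]; ring
        · simp [hjy, Ne.symm hjy]
      · simp only [if_neg hix, Matrix.sub_apply, Matrix.add_apply, Matrix.smul_apply,
          Matrix.single, Matrix.of_apply, smul_eq_mul, hM]
        have : ¬(x = i ∧ y = j) := fun hh => hix hh.1.symm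
        simp [this]
    rw [hrow, Matrix.det_updateRow_add, Matrix.det_updateRow_smul, Matrix.updateRow_eq_self,
      ← Matrix.adjugate_apply]
    ring
  have hg : HasDerivAt
      (fun s : ℝ => (1 - (P + (s - 1) • Matrix.single x y c)).det)
      (-(c * M.adjugate y x)) 1 := by
    have h0 : HasDerivAt (fun s : ℝ => M.det - (s - 1) * c * M.adjugate y x)
        (-(c * M.adjugate y x)) 1 := by
      have h1 : HasDerivAt (fun s : ℝ => (s - 1) * c * M.adjugate y x)
          (c * M.adjugate y x) 1 := by
        simpa using (((hasDerivAt_id (1 : ℝ)).sub_const 1).mul_const c).mul_const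
          (M.adjugate y x)
      exact h1.const_sub M.det
    exact h0.congr_of_eventuallyEq (Filter.Eventually.of_forall fun s => (key s))
  have hg1 : (1 - (P + ((1 : ℝ) - 1) • Matrix.single x y c)).det = M.det := by
    rw [key]; ring
  have hne : (1 - (P + ((1 : ℝ) - 1) • Matrix.single x y c)).det ≠ 0 := by
    rw [hg1]; exact hdet
  have hlog : HasDerivAt
      (fun s : ℝ =>
        - Real.log ((1 - (P + (s - 1) • Matrix.single x y c)).det))
      (c * M.adjugate y x / M.det) 1 := by
    have h2 := ((Real.hasDerivAt_log hne).comp 1 hg).neg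
    refine h2.congr_deriv ?_
    rw [hg1]
    field_simp
  -- identify the derivative value
  have hMinv : c * M.adjugate y x / M.det = c * M⁻¹ y x := by
    rw [Matrix.inv_def]
    simp [Matrix.smul_apply, Ring.inverse_eq_inv, div_eq_mul_inv]
    ring
  -- relate M⁻¹ to (diagonal lam - C)⁻¹
  have hlam' : ∀ i, lam i ≠ 0 := fun i => (hlam i).ne'
  have hDC : Matrix.diagonal lam - C = Matrix.diagonal lam * M := by
    ext i j
    rw [Matrix.diagonal_mul]
    simp only [hM, Matrix.sub_apply, Matrix.one_apply, Matrix.diagonal_apply, hP]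
    by_cases hij : i = j
    · subst hij
      simp only [eq_self_iff_true, if_true]
      rw [mul_sub, mul_one, ← mul_div_assoc, mul_div_cancel_left₀ _ (hlam' i)]
    · simp only [if_neg hij]
      rw [zero_sub, zero_sub, mul_neg, neg_inj, ← mul_div_assoc,
        mul_div_cancel_left₀ _ (hlam' i)]
  have hDinv : (Matrix.diagonal lam)⁻¹ = Matrix.diagonal fun i => (lam i)⁻¹ := by
    apply Matrix.inv_eq_right_inv
    rw [Matrix.diagonal_mul_diagonal]
    have h3 : (fun i => lam i * (lam i)⁻¹) = fun _ : Fin n => (1 : ℝ) :=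
      funext fun i => mul_inv_cancel₀ (hlam' i)
    rw [h3, Matrix.diagonal_one]
  have hDCinv : (Matrix.diagonal lam - C)⁻¹ = M⁻¹ * (Matrix.diagonal lam)⁻¹ := by
    rw [hDC, Matrix.mul_inv_rev]
  have hval : (Matrix.diagonal lam - C)⁻¹ x y * C x y = c * M⁻¹ y x := by
    have hsymDC : (Matrix.diagonal lam - C)ᵀ = Matrix.diagonal lam - C := by
      ext i j
      simp only [Matrix.transpose_apply, Matrix.sub_apply, Matrix.diagonal_apply, hsym i j]
      by_cases hij : i = j <;> simp [hij, eq_comm]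
    have hsymInv : (Matrix.diagonal lam - C)⁻¹ x y = (Matrix.diagonal lam - C)⁻¹ y x := by
      have h4 := Matrix.transpose_nonsing_inv (Matrix.diagonal lam - C)
      rw [hsymDC] at h4
      calc (Matrix.diagonal lam - C)⁻¹ x y = ((Matrix.diagonal lam - C)⁻¹)ᵀ y x := rfl
        _ = (Matrix.diagonal lam - C)⁻¹ y x := by rw [h4]
    rw [hsymInv, hDCinv, hDinv, Matrix.mul_diagonal, hc, hP x y]
    rw [div_eq_mul_inv]
    ring
  rw [hval, ← hMinv]
  exact hlog
end

section
/- If M(s) is a differentiable invertible-matrix-valued function with M''(s) = 0 (i.e. M is affine in s), then the n-th derivative of log det M(s) equals (−1)^{n−1}(n−1)!·Tr((M'(s)M(s)⁻¹)^n). -/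
open Matrix Polynomial

section

attribute [local instance] Matrix.linftyOpNormedAddCommGroup Matrix.linftyOpNormedRing
  Matrix.linftyOpNormedAlgebra

variable {m : ℕ} (A B : Matrix (Fin m) (Fin m) ℝ)

local instance : CompleteSpace (Matrix (Fin m) (Fin m) ℝ) := FiniteDimensional.complete ℝ _

-- derivative of t ↦ A + t • B
lemma hasDerivAt_affine (s : ℝ) : HasDerivAt (fun t : ℝ => A + t • B) B s := by
  exact (((hasDerivAt_id s).smul_const B).const_add A).congr_deriv (one_smul ℝ B)

-- derivative of the inverse
lemma affine_inv_hasDerivAt (h : ∀ t : ℝ, IsUnit (A + t • B).det) (s : ℝ) :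
    HasDerivAt (fun t : ℝ => (A + t • B)⁻¹)
      (-((A + s • B)⁻¹ * B * (A + s • B)⁻¹)) s := by
  have hu : IsUnit (A + s • B) := (Matrix.isUnit_iff_isUnit_det _).mpr (h s)
  obtain ⟨u, hu'⟩ := hu
  have h1 : HasDerivAt (fun t : ℝ => Ring.inverse (A + t • B))
      ((-(ContinuousLinearMap.mulLeftRight ℝ (Matrix (Fin m) (Fin m) ℝ) ↑u⁻¹ ↑u⁻¹)) B) s := by
    have hl := hasFDerivAt_ringInverse (𝕜 := ℝ) u
    rw [hu'] at hl
    exact hl.comp_hasDerivAt s (hasDerivAt_affine A B s)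
  have h2 : (fun t : ℝ => Ring.inverse (A + t • B)) = fun t : ℝ => (A + t • B)⁻¹ := by
    funext t; rw [Matrix.nonsing_inv_eq_ringInverse]
  have h3 : (↑u⁻¹ : Matrix (Fin m) (Fin m) ℝ) = (A + s • B)⁻¹ := by
    rw [Matrix.coe_units_inv, hu']
  rw [h2, h3] at h1
  simpa using h1

lemma trace_comp_hasDerivAt {F : ℝ → Matrix (Fin m) (Fin m) ℝ}
    {F' : Matrix (Fin m) (Fin m) ℝ} {s : ℝ} (hF : HasDerivAt F F' s) :
    HasDerivAt (fun t => Matrix.trace (F t)) (Matrix.trace F') s := by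
  have := ((Matrix.traceLinearMap (n := Fin m) (α := ℝ)
    (R := ℝ)).toContinuousLinearMap.hasFDerivAt).comp_hasDerivAt s hF
  exact this

-- derivative of X t = B * (A + t • B)⁻¹
lemma X_hasDerivAt (h : ∀ t : ℝ, IsUnit (A + t • B).det) (s : ℝ) :
    HasDerivAt (fun t : ℝ => B * (A + t • B)⁻¹)
      (-((B * (A + s • B)⁻¹) * (B * (A + s • B)⁻¹))) s := by
  have := (affine_inv_hasDerivAt A B h s).const_mul B
  refine this.congr_deriv (Eq.symm ?_)
  simp [Matrix.mul_assoc]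

lemma Xpow_hasDerivAt (h : ∀ t : ℝ, IsUnit (A + t • B).det) (s : ℝ) (k : ℕ) :
    HasDerivAt (fun t : ℝ => (B * (A + t • B)⁻¹) ^ (k + 1))
      (∑ i ∈ Finset.range (k + 1), (B * (A + s • B)⁻¹) ^ i *
        (-((B * (A + s • B)⁻¹) * (B * (A + s • B)⁻¹))) * (B * (A + s • B)⁻¹) ^ (k - i)) s := by
  induction k with
  | zero => simpa using X_hasDerivAt A B h s
  | succ k ih =>
    have step := ih.mul (X_hasDerivAt A B h s)
    have heq : (fun t : ℝ => (B * (A + t • B)⁻¹) ^ (k + 1) * (B * (A + t • B)⁻¹))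
        = fun t : ℝ => (B * (A + t • B)⁻¹) ^ (k + 1 + 1) := by
      funext t; rw [← pow_succ]
    rw [← heq]
    refine step.congr_deriv (Eq.symm ?_)
    rw [Finset.sum_range_succ, Finset.sum_mul]
    congr 1
    · refine Finset.sum_congr rfl fun i hi => ?_
      have hik : i ≤ k := Nat.lt_succ_iff.mp (Finset.mem_range.mp hi)
      rw [show k + 1 - i = (k - i) + 1 by omega, pow_succ]
      simp [mul_assoc]
    · simp

lemma trace_conj_term (X X' : Matrix (Fin m) (Fin m) ℝ) {i k : ℕ} (hik : i ≤ k) :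
    Matrix.trace (X ^ i * X' * X ^ (k - i)) = Matrix.trace (X ^ k * X') := by
  rw [Matrix.trace_mul_comm, ← mul_assoc, ← pow_add, Nat.sub_add_cancel hik]

lemma trace_Xpow_hasDerivAt (h : ∀ t : ℝ, IsUnit (A + t • B).det) (s : ℝ) (k : ℕ) :
    HasDerivAt (fun t : ℝ => Matrix.trace ((B * (A + t • B)⁻¹) ^ (k + 1)))
      (-((k + 1 : ℝ) * Matrix.trace ((B * (A + s • B)⁻¹) ^ (k + 2)))) s := by
  have h1 := trace_comp_hasDerivAt (Xpow_hasDerivAt A B h s k)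
  convert h1 using 1
  rw [Matrix.trace_sum]
  rw [Finset.sum_congr rfl (fun i hi => trace_conj_term
    (B * (A + s • B)⁻¹) _ (Nat.lt_succ_iff.mp (Finset.mem_range.mp hi)))]
  rw [Finset.sum_const, Finset.card_range, mul_neg, Matrix.trace_neg,
    ← mul_assoc, ← pow_succ, ← pow_succ, nsmul_eq_mul]
  push_cast
  ring

lemma det_affine_hasDerivAt (h : ∀ t : ℝ, IsUnit (A + t • B).det) (s : ℝ) :
    HasDerivAt (fun t : ℝ => (A + t • B).det)
      ((A + s • B).det * Matrix.trace (B * (A + s • B)⁻¹)) s := by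
  set M := A + s • B with hM
  set N := M⁻¹ * B with hN
  set p : Polynomial ℝ := ((1 + (Polynomial.X : Polynomial ℝ) • N.map Polynomial.C).det).divX.divX
    with hp
  have hMN : ∀ t : ℝ, A + t • B = M * (1 + (t - s) • N) := by
    intro t
    rw [mul_add, mul_one, Matrix.mul_smul, hN, ← mul_assoc,
      Matrix.mul_nonsing_inv _ (h s), one_mul, hM, sub_smul]
    abel
  have key : ∀ t : ℝ, (A + t • B).det
      = M.det * (1 + Matrix.trace N * (t - s) + p.eval (t - s) * (t - s) ^ 2) := by
    intro t
    rw [hMN t, Matrix.det_mul, Matrix.det_one_add_smul]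
  have h1 : HasDerivAt (fun t : ℝ => t - s) 1 s := (hasDerivAt_id s).sub_const s
  have h2 : HasDerivAt (fun t : ℝ => p.eval (t - s)) (p.derivative.eval 0 * 1) s :=
    HasDerivAt.comp_of_eq s (p.hasDerivAt 0) h1 (by simp)
  have h3 : HasDerivAt (fun t : ℝ => (t - s) ^ 2) (↑2 * (s - s) ^ (2 - 1) * 1) s := h1.pow 2
  have hg := (((h1.const_mul (Matrix.trace N)).const_add 1).add (h2.mul h3)).const_mul M.det
  rw [funext key]
  refine hg.congr_deriv (Eq.symm ?_)
  rw [hN, Matrix.trace_mul_comm]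
  simp

lemma logdet_hasDerivAt (h : ∀ t : ℝ, IsUnit (A + t • B).det) (s : ℝ) :
    HasDerivAt (fun t : ℝ => Real.log ((A + t • B).det))
      (Matrix.trace (B * (A + s • B)⁻¹)) s := by
  have hne : (A + s • B).det ≠ 0 := (h s).ne_zero
  have := (Real.hasDerivAt_log hne).comp s (det_affine_hasDerivAt A B h s)
  refine this.congr_deriv (Eq.symm ?_)
  rw [← mul_assoc, inv_mul_cancel₀ hne, one_mul]

end

/-- If `M(s) = A + s B` is an affine invertible-matrix-valued function (so `M'' = 0`), then the
`n`-th derivative of `log det M(s)` equals `(-1)^{n-1} (n-1)! Tr((M'(s) M(s)⁻¹)^n)`. -/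
theorem iteratedDeriv_logdet_affine (m : ℕ) (A B : Matrix (Fin m) (Fin m) ℝ)
    (h : ∀ t : ℝ, IsUnit (A + t • B).det) (n : ℕ) (hn : 1 ≤ n) (s : ℝ) :
    iteratedDeriv n (fun t : ℝ => Real.log ((A + t • B).det)) s
      = (-1 : ℝ) ^ (n - 1) * (n - 1).factorial *
        Matrix.trace ((B * (A + s • B)⁻¹) ^ n) := by
  obtain ⟨k, rfl⟩ : ∃ k, n = k + 1 := ⟨n - 1, by omega⟩
  clear hn
  simp only [Nat.add_sub_cancel]
  induction k generalizing s with
  | zero =>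
    rw [iteratedDeriv_one, (logdet_hasDerivAt A B h s).deriv]
    simp
  | succ k ih =>
    rw [iteratedDeriv_succ, funext ih,
      deriv_const_mul _ (trace_Xpow_hasDerivAt A B h s k).differentiableAt,
      (trace_Xpow_hasDerivAt A B h s k).deriv]
    rw [Nat.factorial_succ]
    push_cast
    ring
end

section
/- If X = X₁ ∪ X₂ is a partition and G is the Green matrix (M_λ − C)⁻¹ of a transient symmetric chain, with G^{X_i} the Green matrix of the chain killed outside X_i, then log(det(G)/(det(G^{X₁})det(G^{X₂}))) = Σ_{k≥1} (1/(2k)) Tr([H₁₂H₂₁]^k + [H₂₁H₁₂]^k), where H₁₂ = H^{X₂}|_{X₁} and H₂₁ = H^{X₁}|_{X₂} are the hitting (balayage) kernels, which are strict contractions. -/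
open Matrix

set_option linter.unusedVariables false
set_option linter.unusedSectionVars false

section helpers

variable {n : Type*} [Fintype n] [DecidableEq n]

/-- Conjugation of a positive definite matrix by an invertible matrix. -/
lemma posDef_conj {A B : Matrix n n ℝ} (hA : A.PosDef) (hB : IsUnit B.det) :
    (Bᴴ * A * B).PosDef := by
  refine Matrix.PosDef.of_dotProduct_mulVec_pos (isHermitian_conjTranspose_mul_mul B hA.1) fun x hx => ?_
  have hinj : Function.Injective (B.mulVec) :=
    Matrix.mulVec_injective_iff_isUnit.mpr ((Matrix.isUnit_iff_isUnit_det B).mpr hB)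
  have hBx : B *ᵥ x ≠ 0 := (hinj.ne_iff' (Matrix.mulVec_zero B)).2 hx
  have := hA.dotProduct_mulVec_pos hBx
  calc (0:ℝ) < star (B *ᵥ x) ⬝ᵥ A *ᵥ (B *ᵥ x) := this
    _ = star x ⬝ᵥ (Bᴴ * A * B) *ᵥ x := by
        rw [star_mulVec, ← Matrix.mulVec_mulVec, dotProduct_mulVec, Matrix.vecMul_vecMul,
          ← dotProduct_mulVec]

lemma conj_pow_eq {P Q T : Matrix n n ℝ} (hPQ : P * Q = 1) (hQP : Q * P = 1) (m : ℕ) :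
    (Q * T * P) ^ m = Q * T ^ m * P := by
  induction m with
  | zero => simp [hQP]
  | succ m ih =>
      rw [pow_succ, ih, pow_succ]
      calc Q * T ^ m * P * (Q * T * P) = Q * T ^ m * (P * Q) * T * P := by
            noncomm_ring
        _ = Q * (T ^ m * T) * P := by rw [hPQ]; noncomm_ring

lemma trace_pow_mul_comm (X Y : Matrix n n ℝ) (k : ℕ) :
    Matrix.trace ((X * Y) ^ (k + 1)) = Matrix.trace ((Y * X) ^ (k + 1)) := by
  have h : (X * Y) ^ (k + 1) = X * ((Y * X) ^ k * Y) := by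
    induction k with
    | zero => simp [pow_succ, Matrix.mul_assoc]
    | succ k ih =>
        rw [pow_succ, ih, pow_succ]
        noncomm_ring
  rw [h, Matrix.trace_mul_comm, pow_succ, Matrix.mul_assoc]

/-- Key analytic lemma: `-log det (1 - T) = ∑ trace (T^(k+1)) / (k+1)` for `T` symmetric PSD
with `1 - T` positive definite. -/
lemma hasSum_trace_pow_log {T : Matrix n n ℝ} (hT : T.PosSemidef) (h1 : (1 - T).PosDef) :
    HasSum (fun k : ℕ => Matrix.trace (T ^ (k + 1)) / ((k : ℝ) + 1))
      (-Real.log ((1 - T).det)) := by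
  classical
  set μ : n → ℝ := hT.1.eigenvalues with hμ
  set U : Matrix n n ℝ := (hT.1.eigenvectorUnitary : Matrix n n ℝ) with hUdef
  have hUU : U * star U = 1 := (Matrix.mem_unitaryGroup_iff).mp hT.1.eigenvectorUnitary.2
  have hUU' : star U * U = 1 := (Matrix.mem_unitaryGroup_iff').mp hT.1.eigenvectorUnitary.2
  have hspec : T = U * Matrix.diagonal μ * star U := by
    have := hT.1.spectral_theorem
    simpa [RCLike.ofReal_real_eq_id] using this
  -- determinant of 1 - T
  have hone : (1 : Matrix n n ℝ) - T = U * Matrix.diagonal (fun i => 1 - μ i) * star U := by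
    have : Matrix.diagonal (fun i => 1 - μ i) = 1 - Matrix.diagonal μ := by
      rw [← Matrix.diagonal_one, Matrix.diagonal_sub]
    rw [this, Matrix.mul_sub, Matrix.sub_mul, Matrix.mul_one, hUU, ← hspec]
  have hdet : (1 - T).det = ∏ i, (1 - μ i) := by
    rw [hone, Matrix.det_mul, Matrix.det_mul, mul_comm, ← mul_assoc, ← Matrix.det_mul,
      hUU', Matrix.det_one, one_mul, Matrix.det_diagonal]
  -- eigenvalue bounds
  have hμ0 : ∀ i, 0 ≤ μ i := hT.eigenvalues_nonneg
  have hUdet : IsUnit U.det := by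
    apply IsUnit.of_mul_eq_one (star U).det
    rw [← Matrix.det_mul, hUU, Matrix.det_one]
  have hdiagPD : (Matrix.diagonal (fun i => 1 - μ i)).PosDef := by
    have hx : Uᴴ * (1 - T) * U = Matrix.diagonal (fun i => 1 - μ i) := by
      rw [hone, ← Matrix.star_eq_conjTranspose]
      simp only [← Matrix.mul_assoc]
      rw [hUU', Matrix.one_mul, Matrix.mul_assoc, hUU', Matrix.mul_one]
    exact hx ▸ posDef_conj h1 hUdet
  have hμ1 : ∀ i, μ i < 1 := by
    intro i
    have := (Matrix.posDef_diagonal_iff).mp hdiagPD i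
    linarith
  -- trace of powers
  have htrace : ∀ m : ℕ, Matrix.trace (T ^ m) = ∑ i, μ i ^ m := by
    intro m
    have hp : T ^ m = U * (Matrix.diagonal μ) ^ m * star U := by
      rw [hspec]; exact conj_pow_eq hUU' hUU m
    rw [hp, Matrix.trace_mul_cycle, hUU', Matrix.one_mul,
      Matrix.diagonal_pow, Matrix.trace_diagonal]
    rfl
  -- sum the scalar log series
  have hlog : ∀ i : n, HasSum (fun k : ℕ => μ i ^ (k + 1) / ((k : ℝ) + 1))
      (-Real.log (1 - μ i)) := by
    intro i
    have habs : |μ i| < 1 := by rw [abs_of_nonneg (hμ0 i)]; exact hμ1 i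
    simpa using Real.hasSum_pow_div_log_of_abs_lt_one habs
  have hsum : HasSum (fun k : ℕ => ∑ i, μ i ^ (k + 1) / ((k : ℝ) + 1))
      (∑ i, -Real.log (1 - μ i)) := hasSum_sum (fun i _ => hlog i)
  have hlogdet : ∑ i, -Real.log (1 - μ i) = -Real.log ((1 - T).det) := by
    rw [hdet, Real.log_prod (fun i _ => ne_of_gt (by linarith [hμ1 i] : (0:ℝ) < 1 - μ i)),
      Finset.sum_neg_distrib]
  rw [← hlogdet]
  convert hsum using 2 with k
  rw [htrace, Finset.sum_div]

lemma trace_pow_mul_comm2 {m : Type*} [Fintype m] [DecidableEq m]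
    (X : Matrix m n ℝ) (Y : Matrix n m ℝ) (k : ℕ) :
    Matrix.trace ((X * Y) ^ (k + 1)) = Matrix.trace ((Y * X) ^ (k + 1)) := by
  have h : ∀ j : ℕ, (X * Y) ^ (j + 1) = X * ((Y * X) ^ j * Y) := by
    intro j
    induction j with
    | zero => simp [Matrix.mul_assoc]
    | succ j ih =>
        rw [pow_succ, ih, pow_succ]
        simp only [Matrix.mul_assoc]
  rw [h, Matrix.trace_mul_comm, pow_succ, Matrix.mul_assoc]

end helpers

section main
variable {α β : Type*} [Fintype α] [Fintype β] [DecidableEq α] [DecidableEq β]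

-- principal block positive definiteness
lemma posdef_block11 {M : Matrix (α ⊕ β) (α ⊕ β) ℝ} (hM : M.PosDef) :
    (M.toBlocks₁₁).PosDef := by
  refine Matrix.PosDef.of_dotProduct_mulVec_pos ?_ ?_
  · ext i j
    simpa [Matrix.toBlocks₁₁, Matrix.conjTranspose_apply] using
      (congrFun (congrFun hM.1 (Sum.inl j)) (Sum.inl i)).symm
  · intro x hx
    have hne : (Sum.elim x 0 : α ⊕ β → ℝ) ≠ 0 := by
      intro h
      apply hx
      ext a
      exact congrFun h (Sum.inl a)
    have := hM.dotProduct_mulVec_pos hne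
    have hcalc : star (Sum.elim x 0 : α ⊕ β → ℝ) ⬝ᵥ M *ᵥ Sum.elim x 0
        = star x ⬝ᵥ M.toBlocks₁₁ *ᵥ x := by
      rw [← Matrix.fromBlocks_toBlocks M, Matrix.fromBlocks_mulVec]
      simp [dotProduct, Fintype.sum_sum_type, Matrix.fromBlocks_toBlocks]
    rwa [hcalc] at this

lemma posdef_block22 {M : Matrix (α ⊕ β) (α ⊕ β) ℝ} (hM : M.PosDef) :
    (M.toBlocks₂₂).PosDef := by
  refine Matrix.PosDef.of_dotProduct_mulVec_pos ?_ ?_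
  · ext i j
    simpa [Matrix.toBlocks₂₂, Matrix.conjTranspose_apply] using
      (congrFun (congrFun hM.1 (Sum.inr j)) (Sum.inr i)).symm
  · intro x hx
    have hne : (Sum.elim 0 x : α ⊕ β → ℝ) ≠ 0 := by
      intro h
      apply hx
      ext a
      exact congrFun h (Sum.inr a)
    have := hM.dotProduct_mulVec_pos hne
    have hcalc : star (Sum.elim 0 x : α ⊕ β → ℝ) ⬝ᵥ M *ᵥ Sum.elim 0 x
        = star x ⬝ᵥ M.toBlocks₂₂ *ᵥ x := by
      rw [← Matrix.fromBlocks_toBlocks M, Matrix.fromBlocks_mulVec]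
      simp [dotProduct, Fintype.sum_sum_type, Matrix.fromBlocks_toBlocks]
    rwa [hcalc] at this

-- Schur complement positive definiteness
lemma posdef_schur {A : Matrix α α ℝ} {B : Matrix α β ℝ} {D : Matrix β β ℝ}
    (hM : (Matrix.fromBlocks A B Bᴴ D).PosDef) (hA : A.PosDef) :
    (D - Bᴴ * A⁻¹ * B).PosDef := by
  haveI := hA.isUnit.invertible
  refine Matrix.PosDef.of_dotProduct_mulVec_pos ?_ ?_
  · exact (Matrix.IsHermitian.fromBlocks₁₁ B D hA.1).mp hM.1
  · intro x hx
    have hne : (Sum.elim (-((A⁻¹ * B) *ᵥ x)) x : α ⊕ β → ℝ) ≠ 0 := by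
      intro h
      apply hx
      ext b
      exact congrFun h (Sum.inr b)
    have h2 := hM.dotProduct_mulVec_pos hne
    rw [Matrix.dotProduct_mulVec, Matrix.schur_complement_eq₁₁ B D _ _ hA.1, neg_add_cancel,
      dotProduct_zero, zero_add] at h2
    rwa [Matrix.dotProduct_mulVec]

end main

/-- For a partition `X = X₁ ⊔ X₂` and `G = (M_λ - C)⁻¹` the Green matrix of a transient
symmetric chain, with `G^{X_i}` the Green matrix of the chain killed outside `X_i`, one has
`log (det G / (det G^{X₁} det G^{X₂}))` equal to the trace series over the hitting kernels. -/
theorem loop_two_sets (α β : Type*) [Fintype α] [Fintype β] [DecidableEq α] [DecidableEq β]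
    (lam : α ⊕ β → ℝ) (C : Matrix (α ⊕ β) (α ⊕ β) ℝ)
    (hsym : ∀ i j, C i j = C j i) (hnn : ∀ i j, 0 ≤ C i j) (hdiag : ∀ i, C i i = 0)
    (hPD : (Matrix.diagonal lam - C).PosDef) :
    let M := Matrix.diagonal lam - C
    let H12 := -((M.toBlocks₁₁)⁻¹ * M.toBlocks₁₂)
    let H21 := -((M.toBlocks₂₂)⁻¹ * M.toBlocks₂₁)
    Real.log ((M⁻¹).det / (((M.toBlocks₁₁)⁻¹).det * ((M.toBlocks₂₂)⁻¹).det))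
      = ∑' k : ℕ, (1 / (2 * ((k : ℝ) + 1))) *
          (Matrix.trace ((H12 * H21) ^ (k + 1)) + Matrix.trace ((H21 * H12) ^ (k + 1))) := by
  intro M H12 H21
  classical
  set A : Matrix α α ℝ := M.toBlocks₁₁ with hAdef
  set B : Matrix α β ℝ := M.toBlocks₁₂ with hBdef
  set D : Matrix β β ℝ := M.toBlocks₂₂ with hDdef
  have hA : A.PosDef := posdef_block11 hPD
  have hD : D.PosDef := posdef_block22 hPD
  haveI := hA.isUnit.invertible
  -- the lower-left block is Bᴴ
  have hB21 : M.toBlocks₂₁ = Bᴴ := by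
    ext b a
    simp only [hBdef, Matrix.toBlocks₂₁, Matrix.toBlocks₁₂, Matrix.conjTranspose_apply,
      Matrix.of_apply, star_trivial]
    show (Matrix.diagonal lam - C) (Sum.inr b) (Sum.inl a)
        = (Matrix.diagonal lam - C) (Sum.inl a) (Sum.inr b)
    simp [Matrix.diagonal_apply, hsym (Sum.inr b) (Sum.inl a)]
  have hblock : M = Matrix.fromBlocks A B Bᴴ D := by
    rw [← hB21, hAdef, hBdef, hDdef, Matrix.fromBlocks_toBlocks]
  -- Schur complement
  set K : Matrix β β ℝ := Bᴴ * A⁻¹ * B with hKdef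
  have hSchur : (D - K).PosDef := posdef_schur (hblock ▸ hPD) hA
  have hK : K.PosSemidef := (hA.inv.posSemidef).conjTranspose_mul_mul_same B
  -- square root of D
  open scoped MatrixOrder in set R : Matrix β β ℝ := CFC.sqrt D with hRdef
  open scoped MatrixOrder in have hRps : R.PosSemidef := Matrix.nonneg_iff_posSemidef.mp (CFC.sqrt_nonneg D)
  open scoped MatrixOrder in have hRR : R * R = D := CFC.sqrt_mul_sqrt_self D hD.posSemidef.nonneg
  have hRdet : IsUnit R.det := by
    have : R.det * R.det = D.det := by rw [← Matrix.det_mul, hRR]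
    have hDdet : (0:ℝ) < D.det := hD.det_pos
    refine isUnit_iff_ne_zero.mpr fun h => ?_
    rw [h, mul_zero] at this
    exact hDdet.ne (this ▸ rfl)
  have hRinv : R * R⁻¹ = 1 := Matrix.mul_nonsing_inv R hRdet
  have hRinv' : R⁻¹ * R = 1 := Matrix.nonsing_inv_mul R hRdet
  have hRiH : (R⁻¹).IsHermitian := hRps.1.inv
  -- conjugated matrix T
  set T : Matrix β β ℝ := R⁻¹ * K * R⁻¹ with hTdef
  have hT : T.PosSemidef := by
    have := hK.conjTranspose_mul_mul_same (R⁻¹)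
    rwa [hRiH.eq] at this
  have hDinv : D⁻¹ = R⁻¹ * R⁻¹ := by rw [← hRR, Matrix.mul_inv_rev]
  have hty : R⁻¹ * (D - K) * R⁻¹ = 1 - T := by
    rw [Matrix.mul_sub, Matrix.sub_mul, ← hRR, ← Matrix.mul_assoc, hRinv', Matrix.one_mul,
      hRinv, hTdef]
  have h1T : (1 - T).PosDef := by
    rw [← hty]
    have := posDef_conj (B := R⁻¹) hSchur (by
      have : IsUnit (R.det)⁻¹ := hRdet.inv
      rwa [Matrix.det_nonsing_inv, Ring.inverse_eq_inv'])
    rwa [hRiH.eq] at this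
  -- relation between S = H21 * H12 and T
  have hH21 : H21 = -(D⁻¹ * Bᴴ) := by rw [show H21 = -(D⁻¹ * M.toBlocks₂₁) from rfl, hB21]
  have hS : H21 * H12 = R⁻¹ * T * R := by
    rw [hH21, show H12 = -(A⁻¹ * B) from rfl, Matrix.neg_mul, Matrix.mul_neg, neg_neg,
      hDinv, hTdef, hKdef]
    simp only [Matrix.mul_assoc]
    rw [hRinv', Matrix.mul_one]
  have htr : ∀ k : ℕ, Matrix.trace ((H21 * H12) ^ (k + 1)) = Matrix.trace (T ^ (k + 1)) := by
    intro k
    rw [hS, conj_pow_eq hRinv hRinv' (k + 1), Matrix.trace_mul_cycle, hRinv, Matrix.one_mul]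
  -- determinant identities
  have hApos : (0:ℝ) < A.det := hA.det_pos
  have hDpos : (0:ℝ) < D.det := hD.det_pos
  have hSpos : (0:ℝ) < (D - K).det := hSchur.det_pos
  have hdetM : M.det = A.det * (D - K).det := by
    rw [hblock, Matrix.det_fromBlocks₁₁, Matrix.invOf_eq_nonsing_inv]
  have hdet1T : (1 - T).det = (D - K).det / D.det := by
    have h2 : ((R⁻¹).det) * ((R⁻¹).det) = (D.det)⁻¹ := by
      rw [Matrix.det_nonsing_inv, Ring.inverse_eq_inv', ← mul_inv, ← Matrix.det_mul, hRR]
    rw [← hty, Matrix.det_mul, Matrix.det_mul]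
    rw [mul_comm ((R⁻¹).det * (D - K).det) ((R⁻¹).det), ← mul_assoc, h2, div_eq_mul_inv,
      mul_comm]
  have harg : (M⁻¹).det / ((A⁻¹).det * (D⁻¹).det) = ((1 - T).det)⁻¹ := by
    rw [Matrix.det_nonsing_inv, Matrix.det_nonsing_inv, Matrix.det_nonsing_inv,
      Ring.inverse_eq_inv', hdetM, hdet1T]
    field_simp
  rw [harg, Real.log_inv, ← (hasSum_trace_pow_log hT h1T).tsum_eq]
  refine tsum_congr fun k => ?_
  rw [trace_pow_mul_comm2 H12 H21 k, htr k]
  have hk : ((k:ℝ) + 1) ≠ 0 := by positivity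
  field_simp
  ring
end

section
/- For a recurrent finite connected weighted graph with conductances C, the weighted matrix-tree normalization Z⁰_e = (Σ_{T spanning tree} Π_{{x,y}∈T} C_{x,y})⁻¹ equals |X|·det(G), where det(G) is the determinant of the recurrent Green operator restricted to the hyperplane of zero-mass measures, computed in any orthonormal basis of that hyperplane. -/
open scoped Classical RealInnerProductSpace

open Finset

lemma aux_delta {ι : Type*} [Fintype ι] [DecidableEq ι] (a b : ι) (g : ι → ℝ) :
    ∑ v, ((if v = a then (1:ℝ) else 0) - if v = b then 1 else 0) * g v = g a - g b := by
  simp [sub_mul, Finset.sum_sub_distrib, ite_mul]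

lemma aux_det_sq {m : ℕ} (M : Matrix (Fin m) (Fin m) ℝ) (r c : Fin m → Fin m)
    (hr : Function.Bijective r) (hc : Function.Bijective c) :
    (M.submatrix r c).det * (M.submatrix r c).det = M.det * M.det := by
  let er := Equiv.ofBijective r hr
  let ec := Equiv.ofBijective c hc
  have h1 : M.submatrix r c
      = ((M.submatrix ec ec).submatrix (er.trans ec.symm : Equiv.Perm (Fin m)) id) := by
    ext i j
    simp only [Matrix.submatrix_apply, Equiv.trans_apply, id_eq]
    rw [Equiv.apply_symm_apply]
    rfl
  rw [h1, Matrix.det_permute, Matrix.det_submatrix_equiv_self]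
  rcases Int.units_eq_one_or (Equiv.Perm.sign (er.trans ec.symm : Equiv.Perm (Fin m))) with h | h <;>
    rw [h] <;> push_cast <;> ring

lemma aux_sum_split {n m : ℕ} (h : n = m + 1) (emb : Fin m → Fin n) (Δ : Fin n)
    (hemb : ∀ c, (emb c).1 = c.1) (hΔ : Δ.1 = m) (g : Fin n → ℝ) :
    ∑ c, g (emb c) = (∑ v, g v) - g Δ := by
  subst h
  have h1 : emb = Fin.castSucc := funext fun c => Fin.ext (hemb c)
  have h2 : Δ = Fin.last m := Fin.ext hΔ
  subst h1 h2
  rw [Fin.sum_univ_castSucc]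
  ring

noncomputable def auxInf {n : ℕ} (e : Sym2 (Fin n)) : Fin n :=
  Sym2.lift ⟨fun a b => a ⊓ b, fun a b => inf_comm a b⟩ e

noncomputable def auxSup {n : ℕ} (e : Sym2 (Fin n)) : Fin n :=
  Sym2.lift ⟨fun a b => a ⊔ b, fun a b => sup_comm a b⟩ e

noncomputable def auxBv {n : ℕ} (e : Sym2 (Fin n)) (x : Fin n) : ℝ :=
  (if x = auxInf e then 1 else 0) - if x = auxSup e then 1 else 0

lemma auxInf_mk {n : ℕ} (a b : Fin n) : auxInf s(a, b) = a ⊓ b := rfl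
lemma auxSup_mk {n : ℕ} (a b : Fin n) : auxSup s(a, b) = a ⊔ b := rfl

lemma aux_mk_inf_sup {n : ℕ} (e : Sym2 (Fin n)) : s(auxInf e, auxSup e) = e := by
  induction e using Sym2.ind with
  | _ a b =>
    rw [auxInf_mk, auxSup_mk]
    rcases le_total a b with h | h
    · rw [inf_eq_left.2 h, sup_eq_right.2 h]
    · rw [inf_eq_right.2 h, sup_eq_left.2 h, Sym2.eq_swap]

lemma auxInf_mem {n : ℕ} (e : Sym2 (Fin n)) : auxInf e ∈ e := by
  have := Sym2.mem_mk_left (auxInf e) (auxSup e)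
  rwa [aux_mk_inf_sup] at this

lemma auxSup_mem {n : ℕ} (e : Sym2 (Fin n)) : auxSup e ∈ e := by
  have := Sym2.mem_mk_right (auxInf e) (auxSup e)
  rwa [aux_mk_inf_sup] at this

lemma auxInf_eq_auxSup_iff {n : ℕ} (e : Sym2 (Fin n)) : auxInf e = auxSup e ↔ e.IsDiag := by
  induction e using Sym2.ind with
  | _ a b =>
    rw [auxInf_mk, auxSup_mk, Sym2.mk_isDiag_iff]
    constructor
    · intro h
      rcases le_total a b with h' | h'
      · rw [inf_eq_left.2 h', sup_eq_right.2 h'] at h; exact h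
      · rw [inf_eq_right.2 h', sup_eq_left.2 h'] at h; exact h.symm
    · intro h; subst h; simp

lemma auxBv_diag {n : ℕ} (e : Sym2 (Fin n)) (h : e.IsDiag) (x : Fin n) : auxBv e x = 0 := by
  unfold auxBv
  rw [(auxInf_eq_auxSup_iff e).2 h]
  ring

lemma auxBv_mem_of_ne_zero {n : ℕ} {e : Sym2 (Fin n)} {x : Fin n} (h : auxBv e x ≠ 0) : x ∈ e := by
  unfold auxBv at h
  by_cases h1 : x = auxInf e
  · exact h1 ▸ auxInf_mem e
  by_cases h2 : x = auxSup e
  · exact h2 ▸ auxSup_mem e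
  simp [h1, h2] at h

lemma auxBv_pm {n : ℕ} {e : Sym2 (Fin n)} {x : Fin n} (hx : x ∈ e) (hd : ¬e.IsDiag) :
    auxBv e x = 1 ∨ auxBv e x = -1 := by
  have hne : auxInf e ≠ auxSup e := fun h => hd ((auxInf_eq_auxSup_iff e).1 h)
  have hmem : x = auxInf e ∨ x = auxSup e := by
    conv at hx => rw [← aux_mk_inf_sup e]
    rwa [Sym2.mem_iff] at hx
  unfold auxBv
  rcases hmem with h | h
  · left; subst h; simp [hne]
  · right; subst h; simp [Ne.symm hne]

lemma aux_sym2_eq {n : ℕ} {e : Sym2 (Fin n)} {x y : Fin n} (hx : x ∈ e) (hy : y ∈ e)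
    (hxy : x ≠ y) : e = s(x, y) := by
  induction e using Sym2.ind with
  | _ a b =>
    rw [Sym2.mem_iff] at hx hy
    rcases hx with rfl | rfl <;> rcases hy with rfl | rfl
    · exact absurd rfl hxy
    · rfl
    · exact Sym2.eq_swap
    · exact absurd rfl hxy

lemma auxBv_mul_of_ne {n : ℕ} {x y : Fin n} (hxy : x ≠ y) :
    auxBv s(x, y) x * auxBv s(x, y) y = -1 := by
  unfold auxBv
  rw [auxInf_mk, auxSup_mk]
  rcases lt_or_gt_of_ne hxy with h | h
  · rw [inf_eq_left.2 h.le, sup_eq_right.2 h.le]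
    simp [hxy, Ne.symm hxy]
  · rw [inf_eq_right.2 h.le, sup_eq_left.2 h.le]
    simp [hxy, Ne.symm hxy]

lemma auxBv_sum {n : ℕ} (e : Sym2 (Fin n)) (g : Fin n → ℝ) :
    ∑ v, auxBv e v * g v = g (auxInf e) - g (auxSup e) := by
  unfold auxBv
  simp [sub_mul, Finset.sum_sub_distrib, ite_mul]
lemma aux_lap_decomp {n : ℕ} (C : Fin n → Fin n → ℝ) (hsym : ∀ x y, C x y = C y x)
    (hdiag : ∀ x, C x x = 0) (lam : Fin n → ℝ) (hlam : ∀ x, lam x = ∑ y, C x y)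
    (x y : Fin n) :
    (Matrix.diagonal lam - Matrix.of C) x y
      = ∑ e : Sym2 (Fin n), Sym2.lift ⟨C, hsym⟩ e * auxBv e x * auxBv e y := by
  by_cases hxy : x = y
  · subst hxy
    have h1 : ∀ e : Sym2 (Fin n), Sym2.lift ⟨C, hsym⟩ e * auxBv e x * auxBv e x
        = if x ∈ e ∧ ¬e.IsDiag then Sym2.lift ⟨C, hsym⟩ e else 0 := by
      intro e
      by_cases hmem : x ∈ e ∧ ¬e.IsDiag
      · rcases auxBv_pm hmem.1 hmem.2 with h | h <;> rw [h] <;> simp [hmem]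
      · rw [if_neg hmem]
        by_cases hd : e.IsDiag
        · rw [auxBv_diag e hd]; ring
        · have hx : x ∉ e := fun hx => hmem ⟨hx, hd⟩
          have : auxBv e x = 0 := by
            by_contra h; exact hx (auxBv_mem_of_ne_zero h)
          rw [this]; ring
    rw [Finset.sum_congr rfl fun e _ => h1 e, ← Finset.sum_filter]
    have h3 : ∑ e ∈ univ.filter (fun e : Sym2 (Fin n) => x ∈ e ∧ ¬e.IsDiag),
          Sym2.lift ⟨C, hsym⟩ e = ∑ z ∈ univ.erase x, C x z := by
      refine Finset.sum_bij' (fun e he => Sym2.Mem.other (Finset.mem_filter.mp he).2.1)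
        (fun z hz => s(x, z)) ?_ ?_ ?_ ?_ ?_
      · intro e he
        rcases Finset.mem_filter.mp he with ⟨-, hx, hd⟩
        exact Finset.mem_erase.mpr ⟨Sym2.other_ne hd hx, Finset.mem_univ _⟩
      · intro z hz
        rcases Finset.mem_erase.mp hz with ⟨hzx, -⟩
        refine Finset.mem_filter.mpr ⟨Finset.mem_univ _, Sym2.mem_mk_left _ _, ?_⟩
        rw [Sym2.mk_isDiag_iff]
        exact fun h => hzx h.symm
      · intro e he
        exact Sym2.other_spec (Finset.mem_filter.mp he).2.1
      · intro z hz
        rcases Finset.mem_erase.mp hz with ⟨hzx, -⟩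
        have h := Sym2.other_spec (Sym2.mem_mk_left x z)
        exact Sym2.congr_right.mp h
      · intro e he
        conv_lhs => rw [← Sym2.other_spec (Finset.mem_filter.mp he).2.1]
        rfl
    rw [h3, Finset.sum_erase_eq_sub (Finset.mem_univ x)]
    simp [Matrix.diagonal_apply_eq, hlam x, hdiag x]
  · rw [Finset.sum_eq_single_of_mem s(x, y) (Finset.mem_univ _)]
    · have h2 : (Sym2.lift ⟨C, hsym⟩ s(x,y) : ℝ) = C x y := rfl
      rw [mul_assoc, auxBv_mul_of_ne hxy, h2]
      simp [Matrix.diagonal_apply_ne _ hxy]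
    · intro e _ hne
      by_cases h1 : auxBv e x = 0
      · rw [h1]; ring
      by_cases h2 : auxBv e y = 0
      · rw [h2]; ring
      exact absurd (aux_sym2_eq (auxBv_mem_of_ne_zero h1) (auxBv_mem_of_ne_zero h2) hxy) hne
lemma layerB {n m : ℕ} (hm : n = m + 1) (C : Fin n → Fin n → ℝ)
    (hsym : ∀ x y, C x y = C y x) (hdiag : ∀ x, C x x = 0)
    (lam : Fin n → ℝ) (hlam : ∀ x, lam x = ∑ y, C x y) :
    ((Matrix.diagonal lam - Matrix.of C).submatrix
        (fun c : Fin m => (⟨c.1, by omega⟩ : Fin n)) (fun c : Fin m => (⟨c.1, by omega⟩ : Fin n))).det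
      = ∑ t ∈ Finset.univ.filter
          (fun t : Finset (Sym2 (Fin n)) =>
            (SimpleGraph.fromEdgeSet (↑t : Set (Sym2 (Fin n)))).Connected ∧ t.card = m ∧
              ∀ e ∈ t, ¬e.IsDiag),
          ∏ e ∈ t, Sym2.lift ⟨C, hsym⟩ e := by
  set Δ : Fin n := ⟨m, by omega⟩ with hΔdef
  set emb : Fin m → Fin n := fun c => ⟨c.1, by omega⟩ with hembdef
  set w : Sym2 (Fin n) → ℝ := Sym2.lift ⟨C, hsym⟩ with hwdef
  set L : Matrix (Fin n) (Fin n) ℝ := Matrix.diagonal lam - Matrix.of C with hLdef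
  set term : (Fin m → Sym2 (Fin n)) → ℝ :=
    fun f => (∏ r, (w (f r) * auxBv (f r) (emb r)))
      * (Matrix.of fun r c => auxBv (f r) (emb c)).det with htermdef
  have hrows : L.submatrix emb emb
      = fun r => ∑ e : Sym2 (Fin n), (w e * auxBv e (emb r)) • (fun c => auxBv e (emb c)) := by
    funext r c
    simp only [Finset.sum_apply, Pi.smul_apply, smul_eq_mul]
    rw [Matrix.submatrix_apply, hLdef, aux_lap_decomp C hsym hdiag lam hlam (emb r) (emb c)]
  have hdet1 : (L.submatrix emb emb).det = ∑ f : Fin m → Sym2 (Fin n), term f := by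
    calc (L.submatrix emb emb).det
        = Matrix.detRowAlternating
            (fun r => ∑ e : Sym2 (Fin n), (w e * auxBv e (emb r)) • (fun c => auxBv e (emb c))) := by
          rw [← hrows]; rfl
      _ = ∑ f : Fin m → Sym2 (Fin n), Matrix.detRowAlternating
            (fun r => (w (f r) * auxBv (f r) (emb r)) • (fun c => auxBv (f r) (emb c))) := by
          exact (Matrix.detRowAlternating.toMultilinearMap.map_sum
            (fun r e => (w e * auxBv e (emb r)) • (fun c => auxBv e (emb c))))
      _ = ∑ f : Fin m → Sym2 (Fin n), term f := by
          refine Finset.sum_congr rfl fun f _ => ?_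
          rw [htermdef]
          have := Matrix.detRowAlternating.toMultilinearMap.map_smul_univ
            (fun r => w (f r) * auxBv (f r) (emb r))
            (fun r => (fun c => auxBv (f r) (emb c)))
          exact this.trans (by rw [smul_eq_mul]; rfl)
  have hdet2 : (∑ f : Fin m → Sym2 (Fin n), term f)
      = ∑ f ∈ (Finset.univ.filter
          (fun f : Fin m → Sym2 (Fin n) => Function.Injective f)), term f := by
    refine (Finset.sum_filter_of_ne ?_).symm
    intro f _ hne
    by_contra hni
    apply hne
    rw [Function.not_injective_iff] at hni
    obtain ⟨a, b, hab, hne'⟩ := hni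
    have : (Matrix.of fun r c => auxBv (f r) (emb c)).det = 0 := by
      refine Matrix.det_zero_of_row_eq hne' ?_
      funext c
      simp only [Matrix.of_apply, hab]
    rw [htermdef]
    simp [this]
  have hdet3 : (∑ f ∈ (Finset.univ.filter
          (fun f : Fin m → Sym2 (Fin n) => Function.Injective f)), term f)
      = ∑ S ∈ Finset.powersetCard m (Finset.univ : Finset (Sym2 (Fin n))),
          ∑ f ∈ (Finset.univ.filter
              (fun f : Fin m → Sym2 (Fin n) => Function.Injective f)).filter
              (fun f => Finset.image f Finset.univ = S), term f := by
    refine (Finset.sum_fiberwise_of_maps_to ?_ _).symm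
    intro f hf
    rw [Finset.mem_filter] at hf
    rw [Finset.mem_powersetCard_univ, Finset.card_image_of_injective _ hf.2, Finset.card_univ,
      Fintype.card_fin]
  have key : ∀ S ∈ Finset.powersetCard m (Finset.univ : Finset (Sym2 (Fin n))),
      (∑ f ∈ (Finset.univ.filter
          (fun f : Fin m → Sym2 (Fin n) => Function.Injective f)).filter
          (fun f => Finset.image f Finset.univ = S), term f)
        = if (SimpleGraph.fromEdgeSet (↑S : Set (Sym2 (Fin n)))).Connected ∧ ∀ e ∈ S, ¬e.IsDiag
          then ∏ e ∈ S, w e else 0 := by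
    intro S hS
    have hcard : S.card = m := Finset.mem_powersetCard_univ.1 hS
    set eS : Fin m ≃ {e // e ∈ S} := ((S.equivFin).trans (finCongr hcard)).symm with heSdef
    set D : Matrix (Fin m) (Fin m) ℝ := Matrix.of fun r c => auxBv (↑(eS r) : Sym2 (Fin n)) (emb c)
      with hDdef
    have hfiber : (∑ f ∈ (Finset.univ.filter
          (fun f : Fin m → Sym2 (Fin n) => Function.Injective f)).filter
          (fun f => Finset.image f Finset.univ = S), term f)
        = (∏ e ∈ S, w e) * (D.det * D.det) := by
      have hstep : (∑ π : Equiv.Perm (Fin m), term (fun r => (↑(eS (π r)) : Sym2 (Fin n))))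
          = ∑ f ∈ (Finset.univ.filter
              (fun f : Fin m → Sym2 (Fin n) => Function.Injective f)).filter
              (fun f => Finset.image f Finset.univ = S), term f := by
        refine Finset.sum_bij (fun (π : Equiv.Perm (Fin m)) _ =>
          (fun r => (↑(eS (π r)) : Sym2 (Fin n)))) ?_ ?_ ?_ ?_
        · intro π _
          refine Finset.mem_filter.mpr ⟨Finset.mem_filter.mpr ⟨Finset.mem_univ _, ?_⟩, ?_⟩
          · intro a b hab
            exact π.injective (eS.injective (Subtype.val_injective hab))
          · ext e
            simp only [Finset.mem_image, Finset.mem_univ, true_and]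
            constructor
            · rintro ⟨r, rfl⟩; exact (eS (π r)).2
            · intro he
              exact ⟨π.symm (eS.symm ⟨e, he⟩), by simp⟩
        · intro π _ π' _ h
          ext r
          have h2 : (↑(eS (π r)) : Sym2 (Fin n)) = ↑(eS (π' r)) := congrFun h r
          exact congrArg Fin.val (eS.injective (Subtype.val_injective h2))
        · intro f hf
          rcases Finset.mem_filter.mp hf with ⟨hf1, himg⟩
          rcases Finset.mem_filter.mp hf1 with ⟨-, hinj⟩
          have hmem : ∀ r, f r ∈ S := by
            intro r; rw [← himg]; exact Finset.mem_image_of_mem f (Finset.mem_univ r)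
          have hginj : Function.Injective (fun r => eS.symm ⟨f r, hmem r⟩) := by
            intro a b hab
            apply hinj
            have := eS.symm.injective hab
            exact congrArg Subtype.val this
          refine ⟨Equiv.ofBijective _ (Finite.injective_iff_bijective.mp hginj), Finset.mem_univ _, ?_⟩
          funext r
          show (↑(eS (eS.symm ⟨f r, hmem r⟩)) : Sym2 (Fin n)) = f r
          rw [Equiv.apply_symm_apply]
        · intro π _; rfl
      rw [← hstep]
      have hterm : ∀ π : Equiv.Perm (Fin m),
          term (fun r => (↑(eS (π r)) : Sym2 (Fin n)))
            = (∏ e ∈ S, w e) * ((((Equiv.Perm.sign π : ℤ) : ℝ)) * (∏ r, D (π r) r) * D.det) := by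
        intro π
        have h1 : (∏ r, (w (↑(eS (π r)) : Sym2 (Fin n)) * auxBv (↑(eS (π r)) : Sym2 (Fin n)) (emb r)))
            = (∏ r, w (↑(eS (π r)) : Sym2 (Fin n))) * ∏ r, D (π r) r := by
          rw [Finset.prod_mul_distrib]; rfl
        have h2 : (∏ r, w (↑(eS (π r)) : Sym2 (Fin n))) = ∏ e ∈ S, w e := by
          rw [Equiv.prod_comp π (fun r => w (↑(eS r) : Sym2 (Fin n))),
            Equiv.prod_comp eS (fun x : {e // e ∈ S} => w ↑x)]
          exact Finset.prod_coe_sort S w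
        have h3 : (Matrix.of fun r c => auxBv (↑(eS (π r)) : Sym2 (Fin n)) (emb c))
            = D.submatrix π id := rfl
        rw [htermdef]
        simp only []
        rw [h1, h2, h3, Matrix.det_permute]
        push_cast
        ring
      rw [Finset.sum_congr rfl fun π _ => hterm π, ← Finset.mul_sum]
      congr 1
      rw [← Finset.sum_mul, ← Matrix.det_apply']
    rw [hfiber]
    by_cases hP : (SimpleGraph.fromEdgeSet (↑S : Set (Sym2 (Fin n)))).Connected ∧ ∀ e ∈ S, ¬e.IsDiag
    · rw [if_pos hP]
      have hDD : D.det * D.det = 1 := by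
        obtain ⟨hconn, hnd⟩ := hP
        set G : SimpleGraph (Fin n) := SimpleGraph.fromEdgeSet (↑S : Set (Sym2 (Fin n))) with hGdef
        have hpar : ∀ v : {v : Fin n // v ≠ Δ},
            ∃ u, G.Adj ↑v u ∧ G.dist Δ u + 1 = G.dist Δ ↑v := by
          rintro ⟨v, hv⟩
          show ∃ u, G.Adj v u ∧ G.dist Δ u + 1 = G.dist Δ v
          have h0 : 0 < G.dist Δ v := hconn.pos_dist_of_ne (Ne.symm hv)
          obtain ⟨p, hp⟩ := hconn.exists_walk_length_eq_dist Δ v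
          obtain ⟨u, hadj, q, hq⟩ := SimpleGraph.Walk.exists_eq_cons_of_ne hv p.reverse
          have hlen : q.length + 1 = G.dist Δ v := by
            have h := congrArg SimpleGraph.Walk.length hq
            rw [SimpleGraph.Walk.length_reverse, hp, SimpleGraph.Walk.length_cons] at h
            omega
          have h1 : G.dist Δ u ≤ q.length := by
            have h := SimpleGraph.dist_le q.reverse
            rwa [SimpleGraph.Walk.length_reverse] at h
          have ht := hconn.dist_triangle (u := Δ) (v := u) (w := v)
          have h3 : G.dist u v ≤ 1 := by
            have h4 := SimpleGraph.dist_le (SimpleGraph.Walk.cons hadj.symm SimpleGraph.Walk.nil)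
            simpa using h4
          exact ⟨u, hadj, by omega⟩
        choose pa hadj hd using hpar
        have hΔ1 : ∀ v : {v : Fin n // v ≠ Δ}, (↑v : Fin n) ≠ pa v := fun v => (hadj v).ne
        have hψmem : ∀ v : {v : Fin n // v ≠ Δ}, s((v : Fin n), pa v) ∈ S := by
          intro v
          have h := hadj v
          rw [hGdef, SimpleGraph.fromEdgeSet_adj] at h
          exact h.1
        set ψ : {v : Fin n // v ≠ Δ} → {e // e ∈ S} := fun v => ⟨s((v : Fin n), pa v), hψmem v⟩
          with hψdef
        have hψinj : Function.Injective ψ := by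
          intro v1 v2 h
          have h' : s((v1 : Fin n), pa v1) = s((v2 : Fin n), pa v2) := congrArg Subtype.val h
          rw [Sym2.eq_iff] at h'
          rcases h' with ⟨h1, h2⟩ | ⟨h1, h2⟩
          · exact Subtype.ext h1
          · exfalso
            have e1 := hd v1
            have e2 := hd v2
            rw [h2] at e1
            rw [← h1] at e2
            omega
        have hvinj : Function.Injective (fun c : Fin m =>
            (⟨emb c, fun h => absurd (congrArg Fin.val h) (by simpa using c.2.ne)⟩ :
              {v : Fin n // v ≠ Δ})) := by
          intro a b hab
          have h2 : emb a = emb b := congrArg Subtype.val hab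
          have h3 := congrArg Fin.val h2
          exact Fin.ext h3
        have hvsurj : Function.Surjective (fun c : Fin m =>
            (⟨emb c, fun h => absurd (congrArg Fin.val h) (by simpa using c.2.ne)⟩ :
              {v : Fin n // v ≠ Δ})) := by
          rintro ⟨v, hv⟩
          have h1 : v.1 ≠ m := fun h => hv (Fin.ext h)
          have h2 : v.1 < n := v.2
          exact ⟨⟨v.1, by omega⟩, Subtype.ext (Fin.ext rfl)⟩
        set vE : Fin m ≃ {v : Fin n // v ≠ Δ} :=
          Equiv.ofBijective _ ⟨hvinj, hvsurj⟩ with hvEdef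
        set τ : Equiv.Perm (Fin m) := Tuple.sort (fun i => G.dist Δ ↑(vE i)) with hτdef
        have hmono : Monotone ((fun i => G.dist Δ ↑(vE i)) ∘ τ) := Tuple.monotone_sort _
        set ρ : Fin m → {v : Fin n // v ≠ Δ} := fun i => vE (τ i) with hρdef
        have hrinj : Function.Injective (fun i => eS.symm (ψ (ρ i))) := by
          intro a b h
          exact τ.injective (vE.injective (hψinj (eS.symm.injective h)))
        set F : Matrix (Fin m) (Fin m) ℝ := D.submatrix (fun i => eS.symm (ψ (ρ i))) (fun j => τ j)
          with hFdef
        have hFentry : ∀ i j, F i j = auxBv (↑(ψ (ρ i)) : Sym2 (Fin n)) ((ρ j : Fin n)) := by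
          intro i j
          show auxBv (↑(eS (eS.symm (ψ (ρ i)))) : Sym2 (Fin n)) (emb (τ j)) = _
          rw [Equiv.apply_symm_apply]
          rfl
        have hFmem : ∀ i, ((ρ i : Fin n)) ∈ (↑(ψ (ρ i)) : Sym2 (Fin n)) := fun i =>
          Sym2.mem_mk_left _ _
        have hFnd : ∀ i, ¬(↑(ψ (ρ i)) : Sym2 (Fin n)).IsDiag := by
          intro i
          show ¬(s((ρ i : Fin n), pa (ρ i))).IsDiag
          rw [Sym2.mk_isDiag_iff]
          exact hΔ1 (ρ i)
        have hFdiag : ∀ i, F i i * F i i = 1 := by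
          intro i
          rcases auxBv_pm (hFmem i) (hFnd i) with h | h <;> rw [hFentry, h] <;> norm_num
        have htri : ∀ i j, i < j → F i j = 0 := by
          intro i j hij
          by_contra h0
          rw [hFentry] at h0
          have hmem := auxBv_mem_of_ne_zero h0
          rw [show (↑(ψ (ρ i)) : Sym2 (Fin n)) = s((ρ i : Fin n), pa (ρ i)) from rfl,
            Sym2.mem_iff] at hmem
          have h5 : G.dist Δ ↑(ρ i) ≤ G.dist Δ ↑(ρ j) := hmono hij.le
          rcases hmem with h | h
          · exact absurd (τ.injective (vE.injective (Subtype.ext h))) hij.ne'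
          · have e1 := hd (ρ i)
            rw [← h] at e1
            omega
        have hdetF : F.det = ∏ i, F i i := by
          refine Matrix.det_of_lowerTriangular F ?_
          intro i j hij
          exact htri i j (by exact_mod_cast hij)
        have hFF : F.det * F.det = 1 := by
          rw [hdetF, ← Finset.prod_mul_distrib]
          rw [Finset.prod_congr rfl fun i _ => hFdiag i]
          exact Finset.prod_const_one
        have := aux_det_sq D (fun i => eS.symm (ψ (ρ i))) (fun j => τ j)
          (Finite.injective_iff_bijective.mp hrinj) τ.bijective
        rw [← this]
        exact hFF
      rw [hDD, mul_one]
    · rw [if_neg hP]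
      have hD0 : D.det = 0 := by
        by_cases hndall : ∀ e ∈ S, ¬e.IsDiag
        · have hnc : ¬(SimpleGraph.fromEdgeSet (↑S : Set (Sym2 (Fin n)))).Connected := by tauto
          set G : SimpleGraph (Fin n) := SimpleGraph.fromEdgeSet (↑S : Set (Sym2 (Fin n)))
            with hGdef
          have hex : ∃ x0, ¬G.Reachable Δ x0 := by
            by_contra hall
            push_neg at hall
            exact hnc ((SimpleGraph.connected_iff _).mpr
              ⟨fun u v => (hall u).symm.trans (hall v), ⟨Δ⟩⟩)
          obtain ⟨x0, hx0⟩ := hex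
          have hx0Δ : x0 ≠ Δ := by
            intro h
            subst h
            exact hx0 (SimpleGraph.Reachable.refl _)
          set g : Fin n → ℝ := fun v => if G.Reachable x0 v then 1 else 0 with hgdef
          have hgΔ : g Δ = 0 := by
            simp only [hgdef, ite_eq_right_iff]
            intro h
            exact absurd h.symm hx0
          have hgadj : ∀ e ∈ S, g (auxInf e) = g (auxSup e) := by
            intro e he
            have hA : G.Adj (auxInf e) (auxSup e) := by
              rw [hGdef, SimpleGraph.fromEdgeSet_adj]
              refine ⟨?_, ?_⟩
              · rw [aux_mk_inf_sup e]
                exact Finset.mem_coe.mpr he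
              · intro h
                exact hndall e he ((auxInf_eq_auxSup_iff e).1 h)
            simp only [hgdef]
            by_cases hr : G.Reachable x0 (auxInf e)
            · rw [if_pos hr, if_pos (hr.trans hA.reachable)]
            · rw [if_neg hr, if_neg (fun h => hr (h.trans hA.symm.reachable))]
          set u : Fin m → ℝ := fun c => g (emb c) with hudef
          have hu0 : u ≠ 0 := by
            have hne : x0.1 ≠ m := fun h => hx0Δ (Fin.ext h)
            have hlt : x0.1 < m := by have := x0.2; omega
            intro h
            have h2 := congrFun h ⟨x0.1, hlt⟩
            have hembx : emb ⟨x0.1, hlt⟩ = x0 := Fin.ext rfl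
            rw [hudef] at h2
            simp only [Pi.zero_apply] at h2
            rw [hembx, hgdef] at h2
            simp at h2
          have hDu : D.mulVec u = 0 := by
            funext r
            have he := (eS r).2
            simp only [Matrix.mulVec, dotProduct, Pi.zero_apply]
            have h2 : ∑ c, D r c * u c
                = (∑ v, auxBv (↑(eS r) : Sym2 (Fin n)) v * g v)
                  - auxBv (↑(eS r) : Sym2 (Fin n)) Δ * g Δ :=
              aux_sum_split hm emb Δ (fun c => rfl) rfl
                (fun v => auxBv (↑(eS r) : Sym2 (Fin n)) v * g v)
            rw [h2, auxBv_sum, hgadj _ he, hgΔ]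
            ring
          exact Matrix.exists_mulVec_eq_zero_iff.mp ⟨u, hu0, hDu⟩
        · push_neg at hndall
          obtain ⟨e0, he0, hd0⟩ := hndall
          refine Matrix.det_eq_zero_of_row_eq_zero (eS.symm ⟨e0, he0⟩) ?_
          intro c
          show auxBv (↑(eS (eS.symm ⟨e0, he0⟩)) : Sym2 (Fin n)) (emb c) = 0
          rw [Equiv.apply_symm_apply]
          exact auxBv_diag e0 hd0 _
      simp [hD0]
  calc ((Matrix.diagonal lam - Matrix.of C).submatrix
        (fun c : Fin m => (⟨c.1, by omega⟩ : Fin n)) (fun c : Fin m => (⟨c.1, by omega⟩ : Fin n))).det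
      = (L.submatrix emb emb).det := rfl
    _ = ∑ S ∈ Finset.powersetCard m (Finset.univ : Finset (Sym2 (Fin n))),
          (if (SimpleGraph.fromEdgeSet (↑S : Set (Sym2 (Fin n)))).Connected ∧ ∀ e ∈ S, ¬e.IsDiag
            then ∏ e ∈ S, w e else 0) := by
        rw [hdet1, hdet2, hdet3]
        exact Finset.sum_congr rfl key
    _ = ∑ t ∈ (Finset.powersetCard m (Finset.univ : Finset (Sym2 (Fin n)))).filter
          (fun S : Finset (Sym2 (Fin n)) => (SimpleGraph.fromEdgeSet (↑S : Set (Sym2 (Fin n)))).Connected ∧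
            ∀ e ∈ S, ¬e.IsDiag), ∏ e ∈ t, w e := (Finset.sum_filter _ _).symm
    _ = ∑ t ∈ Finset.univ.filter
          (fun t : Finset (Sym2 (Fin n)) =>
            (SimpleGraph.fromEdgeSet (↑t : Set (Sym2 (Fin n)))).Connected ∧ t.card = m ∧
              ∀ e ∈ t, ¬e.IsDiag),
          ∏ e ∈ t, w e := by
        refine Finset.sum_congr ?_ fun _ _ => rfl
        ext S
        simp only [Finset.mem_filter, Finset.mem_powersetCard_univ, Finset.mem_univ, true_and]
        tauto
/-- Matrix-tree normalization for a recurrent connected weighted graph: the inverse of the sum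
over spanning trees of the products of their conductances equals `|X| · det(G)`, where
`det(G)` is the determinant of the recurrent Green operator (a bilinear form on the
hyperplane of zero-mass measures), computed in any orthonormal basis of that hyperplane. -/
theorem matrix_tree_recurrent (n : ℕ) (hn : 0 < n)
    (C : Fin n → Fin n → ℝ)
    (hsym : ∀ x y, C x y = C y x) (hnn : ∀ x y, 0 ≤ C x y) (hdiag : ∀ x, C x x = 0)
    (hconn : ∀ f : Fin n → ℝ, (∀ x y, C x y ≠ 0 → f x = f y) → ∀ x y, f x = f y)
    (lam : Fin n → ℝ) (hlam : ∀ x, lam x = ∑ y, C x y)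
    (Gmat : Matrix (Fin n) (Fin n) ℝ)
    (hG : ∀ μ : Fin n → ℝ, ∑ x, μ x = 0 →
      (Matrix.diagonal lam - Matrix.of C).mulVec (Gmat.mulVec μ) = μ)
    (H : Submodule ℝ (EuclideanSpace ℝ (Fin n)))
    (hH : ∀ v : EuclideanSpace ℝ (Fin n), v ∈ H ↔ ∑ x, v x = 0)
    (b : OrthonormalBasis (Fin (n - 1)) ℝ ↥H) :
    (∑ t ∈ Finset.univ.filter
        (fun t : Finset (Sym2 (Fin n)) =>
          (SimpleGraph.fromEdgeSet (↑t : Set (Sym2 (Fin n)))).Connected ∧ t.card = n - 1 ∧ ∀ e ∈ t, ¬e.IsDiag),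
        ∏ e ∈ t, Sym2.lift ⟨C, hsym⟩ e)⁻¹
      = (n : ℝ) * (Matrix.of fun i j : Fin (n - 1) =>
          ⟪((b i : ↥H) : EuclideanSpace ℝ (Fin n)),
            ((WithLp.equiv 2 (Fin n → ℝ)).symm
              (Gmat.mulVec ((b j : ↥H) : EuclideanSpace ℝ (Fin n))))⟫).det := by
  have hm : n = (n - 1) + 1 := by omega
  set Mst : Matrix (Fin (n - 1)) (Fin (n - 1)) ℝ := Matrix.of fun i j : Fin (n - 1) =>
      ⟪((b i : ↥H) : EuclideanSpace ℝ (Fin n)),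
        ((WithLp.equiv 2 (Fin n → ℝ)).symm
          (Gmat.mulVec ((b j : ↥H) : EuclideanSpace ℝ (Fin n))))⟫ with hMstdef
  set Δ : Fin n := ⟨n - 1, by omega⟩ with hΔdef
  set emb : Fin (n - 1) → Fin n := fun c => ⟨c.1, by omega⟩ with hembdef
  set L : Matrix (Fin n) (Fin n) ℝ := Matrix.diagonal lam - Matrix.of C with hLdef
  have hB : (L.submatrix emb emb).det
      = ∑ t ∈ Finset.univ.filter
          (fun t : Finset (Sym2 (Fin n)) =>
            (SimpleGraph.fromEdgeSet (↑t : Set (Sym2 (Fin n)))).Connected ∧ t.card = n - 1 ∧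
              ∀ e ∈ t, ¬e.IsDiag),
          ∏ e ∈ t, Sym2.lift ⟨C, hsym⟩ e := layerB hm C hsym hdiag lam hlam
  set Bf : Fin (n - 1) → Fin n → ℝ :=
    fun i v => ((b i : ↥H) : EuclideanSpace ℝ (Fin n)) v with hBfdef
  set μ0 : Fin (n - 1) → Fin n → ℝ :=
    fun x v => (if v = emb x then (1:ℝ) else 0) - if v = Δ then 1 else 0 with hμ0def
  set P : Matrix (Fin (n - 1)) (Fin (n - 1)) ℝ :=
    Matrix.of fun i x => ∑ z, Bf i z * μ0 x z with hPdef
  set N : Matrix (Fin (n - 1)) (Fin (n - 1)) ℝ :=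
    Matrix.of fun y x => ∑ v, μ0 y v * (Gmat.mulVec (μ0 x)) v with hNdef
  have hembne : ∀ x, emb x ≠ Δ := by
    intro x h
    have h2 := congrArg Fin.val h
    simp only [hembdef, hΔdef] at h2
    exact absurd h2 (by have := x.2; omega)
  have hembinj : ∀ x y : Fin (n-1), emb x = emb y ↔ x = y := by
    intro x y
    constructor
    · intro h
      have h3 := congrArg Fin.val h
      exact Fin.ext h3
    · intro h; rw [h]
  have hsum0 : ∀ x, ∑ v, μ0 x v = 0 := by
    intro x
    have h := aux_delta (emb x) Δ (fun _ => (1:ℝ))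
    simp only [mul_one] at h
    rw [show (∑ v, μ0 x v) = (1:ℝ) - 1 from h]
    ring
  have hμH : ∀ x, ((WithLp.equiv 2 (Fin n → ℝ)).symm (μ0 x)) ∈ H := by
    intro x
    rw [hH]
    have h : ∀ v, ((WithLp.equiv 2 (Fin n → ℝ)).symm (μ0 x)) v = μ0 x v :=
      fun v => rfl
    rw [Finset.sum_congr rfl fun v _ => h v]
    exact hsum0 x
  have F1 : ∀ (u : EuclideanSpace ℝ (Fin n)), u ∈ H → ∀ v : Fin n,
      u v = ∑ i, (∑ z, Bf i z * u z) * Bf i v := by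
    intro u hu v
    have h2 : ∀ i, b.repr ⟨u, hu⟩ i = ∑ z, Bf i z * u z := by
      intro i
      rw [b.repr_apply_apply, Submodule.coe_inner, PiLp.inner_apply]
      simp [RCLike.inner_apply, conj_trivial]
      exact Finset.sum_congr rfl fun z _ => mul_comm _ _
    have h4 : u = ∑ i, (b.repr ⟨u, hu⟩ i) • ((b i : ↥H) : EuclideanSpace ℝ (Fin n)) := by
      have h1 := b.sum_repr ⟨u, hu⟩
      have h3 := congrArg (fun x : ↥H => (x : EuclideanSpace ℝ (Fin n))) h1
      simp only at h3
      conv_lhs => rw [← h3]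
      rw [AddSubmonoidClass.coe_finset_sum]
      exact Finset.sum_congr rfl fun i _ => rfl
    have h5 := congrArg (WithLp.linearEquiv 2 ℝ (Fin n → ℝ)) h4
    rw [map_sum] at h5
    simp only [map_smul] at h5
    have h6 := congrFun h5 v
    rw [Finset.sum_apply] at h6
    simp only [Pi.smul_apply, smul_eq_mul, WithLp.linearEquiv_apply] at h6
    refine h6.trans ?_
    exact Finset.sum_congr rfl fun i _ => by rw [h2 i]; rfl
  have hexp : ∀ x (zz : Fin n), μ0 x zz = ∑ j, P j x * Bf j zz := by
    intro x zz
    have h := F1 ((WithLp.equiv 2 (Fin n → ℝ)).symm (μ0 x)) (hμH x) zz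
    simp only [WithLp.equiv_symm_apply, PiLp.toLp_apply] at h
    rw [h]
    exact Finset.sum_congr rfl fun j _ => rfl
  have hMst : ∀ i j, Mst i j = ∑ v, Bf i v * (Gmat.mulVec (Bf j)) v := by
    intro i j
    rw [hMstdef]
    simp only [Matrix.of_apply]
    rw [PiLp.inner_apply]
    simp only [RCLike.inner_apply, conj_trivial, WithLp.equiv_symm_apply, PiLp.toLp_apply]
    exact Finset.sum_congr rfl fun z _ => mul_comm _ _
  have hNPM : ∀ y x, N y x = ∑ j, (∑ i, P i y * Mst i j) * P j x := by
    intro y x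
    have h1 : ∀ v, (Gmat.mulVec (μ0 x)) v = ∑ j, P j x * (Gmat.mulVec (Bf j)) v := by
      intro v
      simp only [Matrix.mulVec, dotProduct]
      calc ∑ z, Gmat v z * μ0 x z
          = ∑ z, ∑ j, P j x * (Gmat v z * Bf j z) := by
            refine Finset.sum_congr rfl fun z _ => ?_
            rw [hexp x z, Finset.mul_sum]
            exact Finset.sum_congr rfl fun j _ => by ring
        _ = ∑ j, P j x * ∑ z, Gmat v z * Bf j z := by
            rw [Finset.sum_comm]
            exact Finset.sum_congr rfl fun j _ => (Finset.mul_sum _ _ _).symm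
    calc N y x = ∑ v, μ0 y v * (Gmat.mulVec (μ0 x)) v := rfl
      _ = ∑ v, ∑ j, P j x * (μ0 y v * (Gmat.mulVec (Bf j)) v) := by
          refine Finset.sum_congr rfl fun v _ => ?_
          rw [h1 v, Finset.mul_sum]
          exact Finset.sum_congr rfl fun j _ => by ring
      _ = ∑ j, P j x * ∑ v, μ0 y v * (Gmat.mulVec (Bf j)) v := by
          rw [Finset.sum_comm]
          exact Finset.sum_congr rfl fun j _ => (Finset.mul_sum _ _ _).symm
      _ = ∑ j, P j x * ∑ i, P i y * Mst i j := by
          refine Finset.sum_congr rfl fun j _ => ?_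
          congr 1
          calc ∑ v, μ0 y v * (Gmat.mulVec (Bf j)) v
              = ∑ v, ∑ i, P i y * (Bf i v * (Gmat.mulVec (Bf j)) v) := by
                refine Finset.sum_congr rfl fun v _ => ?_
                rw [hexp y v, Finset.sum_mul]
                exact Finset.sum_congr rfl fun i _ => by ring
            _ = ∑ i, P i y * ∑ v, Bf i v * (Gmat.mulVec (Bf j)) v := by
                rw [Finset.sum_comm]
                exact Finset.sum_congr rfl fun i _ => (Finset.mul_sum _ _ _).symm
            _ = ∑ i, P i y * Mst i j :=
                Finset.sum_congr rfl fun i _ => by rw [hMst i j]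
      _ = ∑ j, (∑ i, P i y * Mst i j) * P j x :=
          Finset.sum_congr rfl fun j _ => mul_comm _ _
  have hNPM' : N = P.transpose * Mst * P := by
    ext y x
    rw [Matrix.mul_apply, hNPM y x]
    refine Finset.sum_congr rfl fun j _ => ?_
    rw [Matrix.mul_apply]
    refine congrArg (fun z => z * P j x) (Finset.sum_congr rfl fun i _ => ?_)
    rw [Matrix.transpose_apply]
  have hdelta : ∀ y x : Fin (n-1), (∑ v, μ0 y v * μ0 x v) = (if y = x then 1 else 0) + 1 := by
    intro y x
    have h : (∑ v, μ0 y v * μ0 x v) = μ0 x (emb y) - μ0 x Δ := aux_delta (emb y) Δ (μ0 x)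
    rw [h]
    have h2 : (emb y = emb x) = (y = x) := by
      rw [hembinj y x]
    have h3 : (Δ = emb x) = False := eq_false (fun hh => hembne x hh.symm)
    have h4 : (emb y = Δ) = False := eq_false (hembne y)
    simp only [hμ0def, h2, h3, h4, eq_self_iff_true, if_true, if_false]
    by_cases hyx : y = x
    · simp [hyx]
    · simp [hyx]
  have hPP : P.transpose * P = (1 : Matrix (Fin (n-1)) (Fin (n-1)) ℝ)
      + Matrix.replicateCol Unit (fun _ => (1:ℝ)) * Matrix.replicateRow Unit (fun _ => (1:ℝ)) := by
    ext y x
    have hpars : (∑ i, P i y * P i x) = ∑ v, μ0 y v * μ0 x v := by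
      symm
      calc ∑ v, μ0 y v * μ0 x v
          = ∑ v, ∑ i, P i y * (Bf i v * μ0 x v) := by
            refine Finset.sum_congr rfl fun v _ => ?_
            rw [hexp y v, Finset.sum_mul]
            exact Finset.sum_congr rfl fun i _ => by ring
        _ = ∑ i, P i y * ∑ v, Bf i v * μ0 x v := by
            rw [Finset.sum_comm]
            exact Finset.sum_congr rfl fun i _ => (Finset.mul_sum _ _ _).symm
        _ = ∑ i, P i y * P i x := rfl
    rw [Matrix.mul_apply]
    rw [Finset.sum_congr rfl fun i _ => (by rw [Matrix.transpose_apply] :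
      P.transpose y i * P i x = P i y * P i x)]
    rw [hpars, hdelta y x]
    rw [Matrix.add_apply, Matrix.one_apply, Matrix.mul_apply]
    simp [Matrix.replicateCol_apply, Matrix.replicateRow_apply]
  have hdetPP : (P.transpose * P).det = (n : ℝ) := by
    rw [hPP, Matrix.det_one_add_replicateCol_mul_replicateRow]
    simp [dotProduct]
    rw [Nat.cast_sub hn]
    push_cast
    ring
  have hrowsum : ∀ v : Fin n, ∑ z, L v z = 0 := by
    intro v
    simp only [hLdef, Matrix.sub_apply, Matrix.of_apply]
    rw [Finset.sum_sub_distrib]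
    have h1 : ∑ z, Matrix.diagonal lam v z = lam v := by
      simp [Matrix.diagonal_apply]
    rw [h1, ← hlam v]
    ring
  have hLN : L.submatrix emb emb * N = 1 := by
    ext y x
    rw [Matrix.mul_apply]
    have hGx : L.mulVec (Gmat.mulVec (μ0 x)) = μ0 x := hG (μ0 x) (hsum0 x)
    set gg : Fin n → ℝ := Gmat.mulVec (μ0 x) with hggdef
    have h1 : ∀ z : Fin (n-1), N z x = gg (emb z) - gg Δ := fun z => aux_delta (emb z) Δ gg
    have h2 : ∑ z, (L.submatrix emb emb) y z * N z x
        = ∑ z, (fun v => L (emb y) v * (gg v - gg Δ)) (emb z) := by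
      refine Finset.sum_congr rfl fun z _ => ?_
      rw [h1 z]
      rfl
    have h2b : ∑ z, L (emb y) (emb z) * (gg (emb z) - gg Δ)
        = (∑ v, L (emb y) v * (gg v - gg Δ)) - L (emb y) Δ * (gg Δ - gg Δ) :=
      aux_sum_split hm emb Δ (fun c => rfl) rfl (fun v => L (emb y) v * (gg v - gg Δ))
    rw [h2, h2b]
    have h3 : ∑ v, L (emb y) v * (gg v - gg Δ)
        = (∑ v, L (emb y) v * gg v) - gg Δ * ∑ v, L (emb y) v := by
      rw [Finset.mul_sum, ← Finset.sum_sub_distrib]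
      exact Finset.sum_congr rfl fun v _ => by ring
    rw [h3, hrowsum (emb y)]
    have h4 : (∑ v, L (emb y) v * gg v) = μ0 x (emb y) := by
      have h := congrFun hGx (emb y)
      simpa [Matrix.mulVec, dotProduct] using h
    rw [h4]
    have h5 : μ0 x (emb y) = if y = x then 1 else 0 := by
      simp only [hμ0def]
      rw [if_neg (hembne y)]
      by_cases hyx : y = x
      · rw [if_pos ((hembinj y x).mpr hyx), if_pos hyx]; ring
      · rw [if_neg (fun h => hyx ((hembinj y x).mp h)), if_neg hyx]; ring
    rw [h5]
    simp [Matrix.one_apply]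
  have hdetN : N.det = (n : ℝ) * Mst.det := by
    rw [hNPM', Matrix.det_mul, Matrix.det_mul]
    have h : P.transpose.det * P.det = (n : ℝ) := by rw [← Matrix.det_mul, hdetPP]
    rw [show P.transpose.det * Mst.det * P.det = (P.transpose.det * P.det) * Mst.det from by ring, h]
  have hmain : (L.submatrix emb emb).det * N.det = 1 := by
    rw [← Matrix.det_mul, hLN, Matrix.det_one]
  rw [← hB, ← hdetN]
  exact inv_eq_of_mul_eq_one_right hmain
end

section
/- Trace of a Markov chain: let e be the Dirichlet form of a transient symmetric chain on finite X = D ⊔ F, and define the trace form e^{{F}}(f) = e(H^F f) where H^F is the hitting kernel of F. Then the conductances and killing of e^{{F}} are C^{{F}}_{x,y} = C_{x,y} + Σ_{a,b∈D} C_{x,a} C_{b,y} [G^D]^{a,b} for x≠y in F, and λ^{{F}}_x = λ_x − Σ_{a,b∈D} C_{x,a}C_{b,x}[G^D]^{a,b}; moreover the Green function of e^{{F}} is the restriction of G to F×F and det(G) = det(G^D)·det(G|_{F×F}). -/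
open Matrix

private theorem trace_aux_swap (α β : Type*) [Fintype α] [Fintype β]
    (p : α → ℝ) (Q : α → α → ℝ) (r : α → β → ℝ) (s : β → ℝ) (c : ℝ) :
    ∑ v : β, (∑ a : α, ∑ b : α, p a * Q a b * r b v) * c * s v
      = c * ∑ a : α, p a * ∑ b : α, Q a b * ∑ v : β, r b v * s v := by
  simp only [Finset.mul_sum, Finset.sum_mul]
  rw [Finset.sum_comm]
  refine Finset.sum_congr rfl fun a _ => ?_
  rw [Finset.sum_comm]
  exact Finset.sum_congr rfl fun b _ => Finset.sum_congr rfl fun v _ => by ring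

private theorem trace_aux_main (α β : Type*) [Fintype α] [Fintype β] [DecidableEq α]
    [DecidableEq β]
    (C : α ⊕ β → α ⊕ β → ℝ) (lam : α ⊕ β → ℝ)
    (M : Matrix (α ⊕ β) (α ⊕ β) ℝ)
    (hMe : ∀ i j, M i j = (if i = j then lam i else 0) - C i j)
    (GD : Matrix α α ℝ)
    (hGD : M.toBlocks₁₁ * GD = 1)
    (f g : β → ℝ) :
    dotProduct (Sum.elim (fun a => ∑ b : α, GD a b * ∑ z : β, C (Sum.inl b) (Sum.inr z) * f z) f)
        (M.mulVec (Sum.elim (fun a => ∑ b : α, GD a b * ∑ z : β, C (Sum.inl b) (Sum.inr z) * g z) g))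
      = ∑ u : β, lam (Sum.inr u) * f u * g u -
          ∑ u : β, ∑ v : β, (C (Sum.inr u) (Sum.inr v) +
            ∑ a : α, ∑ b : α, C (Sum.inr u) (Sum.inl a) * GD a b * C (Sum.inl b) (Sum.inr v)) * f u * g v := by
  set w : α → ℝ := fun b => ∑ z : β, C (Sum.inl b) (Sum.inr z) * g z with hw
  set Hg : α ⊕ β → ℝ := Sum.elim (fun a => ∑ b : α, GD a b * w b) g with hHg
  have hAw : ∀ a : α, ∑ b : α, M (Sum.inl a) (Sum.inl b) * (∑ b' : α, GD b b' * w b') = w a := by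
    intro a
    have h0 : M.toBlocks₁₁ *ᵥ (GD *ᵥ w) = w := by
      rw [Matrix.mulVec_mulVec, hGD, Matrix.one_mulVec]
    have := congrFun h0 a
    simpa [Matrix.mulVec, dotProduct, toBlocks₁₁] using this
  have hzero : ∀ a : α, (M.mulVec Hg) (Sum.inl a) = 0 := by
    intro a
    simp only [Matrix.mulVec, dotProduct, Fintype.sum_sum_type, hHg, Sum.elim_inl, Sum.elim_inr]
    rw [hAw a]
    simp only [hMe, reduceCtorEq, if_false, zero_sub, hw]
    simp [Finset.sum_neg_distrib]
  have hbeta : ∀ u : β, (M.mulVec Hg) (Sum.inr u) =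
      lam (Sum.inr u) * g u - ∑ v : β, C (Sum.inr u) (Sum.inr v) * g v
        - ∑ a : α, C (Sum.inr u) (Sum.inl a) * ∑ b : α, GD a b * w b := by
    intro u
    simp only [Matrix.mulVec, dotProduct, Fintype.sum_sum_type, hHg, Sum.elim_inl, Sum.elim_inr,
      hMe, reduceCtorEq, if_false, zero_sub, Sum.inr.injEq]
    have h1 : ∑ x : β, ((if u = x then lam (Sum.inr u) else 0) - C (Sum.inr u) (Sum.inr x)) * g x
        = lam (Sum.inr u) * g u - ∑ x : β, C (Sum.inr u) (Sum.inr x) * g x := by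
      simp [sub_mul, Finset.sum_sub_distrib, ite_mul]
    rw [h1]
    simp only [neg_mul, Finset.sum_neg_distrib]
    ring
  rw [dotProduct, Fintype.sum_sum_type]
  simp only [Sum.elim_inl, Sum.elim_inr]
  have hz2 : ∑ a : α, (∑ b : α, GD a b * ∑ z : β, C (Sum.inl b) (Sum.inr z) * f z) *
      (M.mulVec Hg) (Sum.inl a) = 0 :=
    Finset.sum_eq_zero fun a _ => by rw [hzero a, mul_zero]
  have hb2 : ∑ u : β, f u * (M.mulVec Hg) (Sum.inr u)
      = ∑ u : β, f u * (lam (Sum.inr u) * g u - ∑ v : β, C (Sum.inr u) (Sum.inr v) * g v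
          - ∑ a : α, C (Sum.inr u) (Sum.inl a) * ∑ b : α, GD a b * w b) :=
    Finset.sum_congr rfl fun u _ => by rw [hbeta u]
  rw [hz2, hb2, zero_add]
  simp only [mul_sub, Finset.sum_sub_distrib]
  have h2 : ∑ u : β, ∑ v : β, (C (Sum.inr u) (Sum.inr v) +
        ∑ a : α, ∑ b : α, C (Sum.inr u) (Sum.inl a) * GD a b * C (Sum.inl b) (Sum.inr v)) * f u * g v
      = (∑ u : β, f u * ∑ v : β, C (Sum.inr u) (Sum.inr v) * g v)
        + ∑ u : β, f u * ∑ a : α, C (Sum.inr u) (Sum.inl a) * ∑ b : α, GD a b * w b := by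
    rw [← Finset.sum_add_distrib]
    refine Finset.sum_congr rfl fun u _ => ?_
    simp only [add_mul, Finset.sum_add_distrib]
    congr 1
    · rw [Finset.mul_sum]; exact Finset.sum_congr rfl fun v _ => by ring
    · rw [hw]
      exact trace_aux_swap α β (fun a => C (Sum.inr u) (Sum.inl a)) GD
        (fun b v => C (Sum.inl b) (Sum.inr v)) g (f u)
  rw [h2]
  have h3 : ∑ u : β, f u * (lam (Sum.inr u) * g u) = ∑ u : β, lam (Sum.inr u) * f u * g u :=
    Finset.sum_congr rfl fun u _ => by ring
  rw [h3]; ring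

/-- Trace of a Markov chain on `F = β` (with `D = α`): the trace Dirichlet form
`e^{{F}}(f,g) = e(H^F f, H^F g)` has conductances
`C^{F}_{x,y} = C_{x,y} + Σ_{a,b∈D} C_{x,a} [G^D]^{a,b} C_{b,y}` and killing normalization
`λ^{F}_x = λ_x - Σ_{a,b∈D} C_{x,a} [G^D]^{a,b} C_{b,x}`; its Green function is the
restriction of `G` to `F × F`, and `det(G) = det(G^D) · det(G|_{F×F})`. -/
theorem trace_markov_chain (α β : Type*) [Fintype α] [Fintype β]
    [DecidableEq α] [DecidableEq β]
    (C : α ⊕ β → α ⊕ β → ℝ)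
    (hsym : ∀ i j, C i j = C j i) (hnn : ∀ i j, 0 ≤ C i j) (hdiag : ∀ i, C i i = 0)
    (κ : α ⊕ β → ℝ) (hκ : ∀ i, 0 ≤ κ i)
    (lam : α ⊕ β → ℝ) (hlam : ∀ i, lam i = κ i + ∑ j, C i j)
    (hPD : (Matrix.diagonal lam - Matrix.of C).PosDef) :
    let M := Matrix.diagonal lam - Matrix.of C
    let GD := (M.toBlocks₁₁)⁻¹
    -- the harmonic extension `H^F f`
    let Hmap : (β → ℝ) → (α ⊕ β → ℝ) := fun f =>
      Sum.elim (fun a => ∑ b : α, GD a b * ∑ z : β, C (Sum.inl b) (Sum.inr z) * f z) f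
    -- the trace conductances (including the diagonal correction)
    let CF : β → β → ℝ := fun u v =>
      C (Sum.inr u) (Sum.inr v) +
        ∑ a : α, ∑ b : α, C (Sum.inr u) (Sum.inl a) * GD a b * C (Sum.inl b) (Sum.inr v)
    -- (1) the trace form is given by `λ` and the conductances `CF`
    (∀ f g : β → ℝ,
        dotProduct (Hmap f) (M.mulVec (Hmap g))
          = ∑ u : β, lam (Sum.inr u) * f u * g u - ∑ u : β, ∑ v : β, CF u v * f u * g v)
      -- (2) the trace killing normalization `λ^{F}`
      ∧ (∀ u : β,
          dotProduct (Hmap fun z => if z = u then (1 : ℝ) else 0)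
              (M.mulVec (Hmap fun z => if z = u then (1 : ℝ) else 0))
            = lam (Sum.inr u) -
                ∑ a : α, ∑ b : α,
                  C (Sum.inr u) (Sum.inl a) * GD a b * C (Sum.inl b) (Sum.inr u))
      -- (3) the Green function of the trace form is the restriction of `G` to `F × F`
      ∧ (Matrix.diagonal (fun u : β => lam (Sum.inr u)) - Matrix.of CF) * (M⁻¹).toBlocks₂₂ = 1
      -- (4) the determinant decomposition `det(G) = det(G^D) det(G|_{F×F})`
      ∧ (M⁻¹).det = ((M.toBlocks₁₁)⁻¹).det * ((M⁻¹).toBlocks₂₂).det := by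
  intro M GD Hmap CF
  have hMP : M.PosDef := hPD
  have hMe : ∀ i j, M i j = (if i = j then lam i else 0) - C i j := by
    intro i j
    simp [M, Matrix.sub_apply, Matrix.diagonal_apply]
  have hMsym : ∀ i j, M i j = M j i := by
    intro i j
    rw [hMe, hMe, hsym]
    by_cases h : i = j <;> simp [h, eq_comm]
  -- the top-left block is positive definite
  have hAPD : (M.toBlocks₁₁).PosDef := by
    refine posDef_iff_dotProduct_mulVec.mpr ⟨?_, ?_⟩
    · ext a b
      simp only [conjTranspose_apply, toBlocks₁₁, of_apply, star_trivial]
      exact hMsym _ _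
    · intro x hx
      have hy : (Sum.elim x 0 : α ⊕ β → ℝ) ≠ 0 := by
        intro h
        apply hx
        ext a
        exact congrFun h (Sum.inl a)
      have := hMP.dotProduct_mulVec_pos hy
      convert this using 1
      simp only [star_trivial, dotProduct, mulVec, Fintype.sum_sum_type, Sum.elim_inl,
        Sum.elim_inr, Pi.zero_apply, mul_zero, zero_mul, Finset.sum_const_zero, add_zero]
      rfl
  haveI iM : Invertible M := hMP.isUnit.invertible
  haveI iA : Invertible M.toBlocks₁₁ := hAPD.isUnit.invertible
  have hGD : M.toBlocks₁₁ * GD = 1 :=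
    Matrix.mul_nonsing_inv _ ((Matrix.isUnit_iff_isUnit_det _).mp hAPD.isUnit)
  have hFB : M = fromBlocks M.toBlocks₁₁ M.toBlocks₁₂ M.toBlocks₂₁ M.toBlocks₂₂ :=
    (fromBlocks_toBlocks M).symm
  haveI iFB : Invertible (fromBlocks M.toBlocks₁₁ M.toBlocks₁₂ M.toBlocks₂₁ M.toBlocks₂₂) :=
    iM.copy _ hFB.symm
  haveI iS : Invertible (M.toBlocks₂₂ - M.toBlocks₂₁ * ⅟(M.toBlocks₁₁) * M.toBlocks₁₂) :=
    invertibleOfFromBlocks₁₁Invertible _ _ _ _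
  have hinvA : ⅟(M.toBlocks₁₁) = (M.toBlocks₁₁)⁻¹ := invOf_eq_nonsing_inv _
  haveI iS' : Invertible (M.toBlocks₂₂ - M.toBlocks₂₁ * (M.toBlocks₁₁)⁻¹ * M.toBlocks₁₂) :=
    iS.copy _ (by rw [hinvA])
  -- the bottom-right block of `M⁻¹` is the inverse of the Schur complement
  have hS22 : (M⁻¹).toBlocks₂₂
      = (M.toBlocks₂₂ - M.toBlocks₂₁ * (M.toBlocks₁₁)⁻¹ * M.toBlocks₁₂)⁻¹ := by
    have h1 : (fromBlocks M.toBlocks₁₁ M.toBlocks₁₂ M.toBlocks₂₁ M.toBlocks₂₂)⁻¹ =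
        fromBlocks (⅟(M.toBlocks₁₁) + ⅟(M.toBlocks₁₁) * M.toBlocks₁₂ *
            ⅟(M.toBlocks₂₂ - M.toBlocks₂₁ * ⅟(M.toBlocks₁₁) * M.toBlocks₁₂) * M.toBlocks₂₁ * ⅟(M.toBlocks₁₁))
          (-(⅟(M.toBlocks₁₁) * M.toBlocks₁₂ * ⅟(M.toBlocks₂₂ - M.toBlocks₂₁ * ⅟(M.toBlocks₁₁) * M.toBlocks₁₂)))
          (-(⅟(M.toBlocks₂₂ - M.toBlocks₂₁ * ⅟(M.toBlocks₁₁) * M.toBlocks₁₂) * M.toBlocks₂₁ * ⅟(M.toBlocks₁₁)))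
          (⅟(M.toBlocks₂₂ - M.toBlocks₂₁ * ⅟(M.toBlocks₁₁) * M.toBlocks₁₂)) := by
      rw [← invOf_eq_nonsing_inv, invOf_fromBlocks₁₁_eq]
    conv_lhs => rw [hFB]
    rw [h1, toBlocks_fromBlocks₂₂, invOf_eq_nonsing_inv, hinvA]
  -- the Schur complement equals the trace form matrix
  have hSmat : Matrix.diagonal (fun u : β => lam (Sum.inr u)) - Matrix.of CF
      = M.toBlocks₂₂ - M.toBlocks₂₁ * GD * M.toBlocks₁₂ := by
    ext u v
    simp only [Matrix.sub_apply, Matrix.diagonal_apply, of_apply, CF,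
      toBlocks₂₂, toBlocks₂₁, toBlocks₁₂, Matrix.mul_apply, hMe,
      Sum.inr.injEq, reduceCtorEq, if_false, zero_sub, Sum.inl.injEq]
    have h : ∀ b : α, (∑ a : α, -C (Sum.inr u) (Sum.inl a) * GD a b) * -C (Sum.inl b) (Sum.inr v)
        = ∑ a : α, C (Sum.inr u) (Sum.inl a) * GD a b * C (Sum.inl b) (Sum.inr v) := by
      intro b
      rw [Finset.sum_mul]
      exact Finset.sum_congr rfl fun a _ => by ring
    rw [Finset.sum_congr rfl fun b _ => h b, Finset.sum_comm]
    ring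
  have part1 : ∀ f g : β → ℝ,
      dotProduct (Hmap f) (M.mulVec (Hmap g))
        = ∑ u : β, lam (Sum.inr u) * f u * g u - ∑ u : β, ∑ v : β, CF u v * f u * g v :=
    fun f g => trace_aux_main α β C lam M hMe GD hGD f g
  refine ⟨part1, ?_, ?_, ?_⟩
  · -- (2)
    intro u
    rw [part1]
    simp only [CF]
    simp [mul_ite, ite_mul, mul_one, mul_zero, zero_mul, one_mul, Finset.sum_ite_eq,
      Finset.sum_ite_eq', hdiag]
  · -- (3)
    rw [hSmat, hS22]
    have : GD = (M.toBlocks₁₁)⁻¹ := rfl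
    rw [this]
    exact Matrix.mul_nonsing_inv _ ((Matrix.isUnit_iff_isUnit_det _).mp (isUnit_of_invertible _))
  · -- (4)
    have hdetM : M.det = (M.toBlocks₁₁).det *
        (M.toBlocks₂₂ - M.toBlocks₂₁ * (M.toBlocks₁₁)⁻¹ * M.toBlocks₁₂).det := by
      conv_lhs => rw [hFB]
      rw [det_fromBlocks₁₁, hinvA]
    rw [hS22, Matrix.det_nonsing_inv, Matrix.det_nonsing_inv, Matrix.det_nonsing_inv,
      hdetM, Ring.inverse_eq_inv', mul_inv]
end
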